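/- arXiv:2407.02615 — 2 statements merged into one kernel-verified Lean document; each statement's English description precedes it below -/
import Mathlib

section
/- Let A, B, C be simple graphs on countable vertex sets such that in each of A, B, C every connected component is finite and for every connected component only finitely many connected components are isomorphic to it. If C is nonempty and the strong product A ⊠ C is isomorphic to B ⊠ C, then A is isomorphic to B. -/
/-- The strong product of simple graphs: `(g, h)` and `(g', h')` are adjacent iff
(`g = g'` and `h h'` is an edge), or (`g g'` is an edge and `h = h'`), or
(`g g'` is an edge and `h h'` is an edge). -/
def strongProd {α β : Type} (G : SimpleGraph α) (H : SimpleGraph β) :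
    SimpleGraph (α × β) where
  Adj p q :=
    (p.1 = q.1 ∧ H.Adj p.2 q.2) ∨ (G.Adj p.1 q.1 ∧ p.2 = q.2) ∨
      (G.Adj p.1 q.1 ∧ H.Adj p.2 q.2)
  symm := by
    constructor
    rintro ⟨g, h⟩ ⟨g', h'⟩ (⟨rfl, hH⟩ | ⟨hG, rfl⟩ | ⟨hG, hH⟩)
    · exact Or.inl ⟨rfl, hH.symm⟩
    · exact Or.inr (Or.inl ⟨hG.symm, rfl⟩)
    · exact Or.inr (Or.inr ⟨hG.symm, hH.symm⟩)
  loopless := by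
    constructor
    rintro ⟨g, h⟩ (⟨-, hH⟩ | ⟨hG, -⟩ | ⟨hG, -⟩)
    · exact H.irrefl hH
    · exact G.irrefl hG
    · exact G.irrefl hG

namespace S17
open SimpleGraph

variable {V W U V' W' : Type}

/-- Strong homomorphism (hom of reflexive closures). -/
def IsSHom (X : SimpleGraph V) (Y : SimpleGraph W) (f : V → W) : Prop :=
  ∀ ⦃x y⦄, X.Adj x y → f x = f y ∨ Y.Adj (f x) (f y)

lemma IsSHom.comp {X : SimpleGraph V} {Y : SimpleGraph W} {Z : SimpleGraph U}
    {f : V → W} {g : W → U} (hg : IsSHom Y Z g) (hf : IsSHom X Y f) :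
    IsSHom X Z (g ∘ f) := by
  intro x y h
  rcases hf h with h1 | h1
  · exact Or.inl (congrArg g h1)
  · exact hg h1

lemma Iso.isSHom {X : SimpleGraph V} {Y : SimpleGraph W} (e : X ≃g Y) :
    IsSHom X Y e := fun x y h => Or.inr (e.map_adj_iff.2 h)

def SHom (X : SimpleGraph V) (Y : SimpleGraph W) : Type :=
  {f : V → W // IsSHom X Y f}

def ISHom (X : SimpleGraph V) (Y : SimpleGraph W) : Type :=
  {f : V → W // IsSHom X Y f ∧ Function.Injective f}

instance {X : SimpleGraph V} {Y : SimpleGraph W} [Finite V] [Finite W] :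
    Finite (SHom X Y) := Subtype.finite

instance {X : SimpleGraph V} {Y : SimpleGraph W} [Finite V] [Finite W] :
    Finite (ISHom X Y) := Subtype.finite

/-- SHoms into a strong product = pairs of SHoms. -/
def shomProdEquiv (X : SimpleGraph V) (G : SimpleGraph W) (H : SimpleGraph U) :
    SHom X (strongProd G H) ≃ SHom X G × SHom X H where
  toFun f := ⟨⟨fun x => (f.1 x).1, by
      intro x y h
      rcases f.2 h with h1 | (⟨h1, -⟩ | ⟨h1, -⟩ | ⟨h1, -⟩)
      · exact Or.inl (congrArg Prod.fst h1)
      · exact Or.inl h1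
      · exact Or.inr h1
      · exact Or.inr h1⟩,
    ⟨fun x => (f.1 x).2, by
      intro x y h
      rcases f.2 h with h1 | (⟨-, h1⟩ | ⟨-, h1⟩ | ⟨-, h1⟩)
      · exact Or.inl (congrArg Prod.snd h1)
      · exact Or.inr h1
      · exact Or.inl h1
      · exact Or.inr h1⟩⟩
  invFun p := ⟨fun x => (p.1.1 x, p.2.1 x), by
      intro x y h
      rcases p.1.2 h with h1 | h1 <;> rcases p.2.2 h with h2 | h2
      · exact Or.inl (Prod.ext h1 h2)
      · exact Or.inr (Or.inl ⟨h1, h2⟩)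
      · exact Or.inr (Or.inr (Or.inl ⟨h1, h2⟩))
      · exact Or.inr (Or.inr (Or.inr ⟨h1, h2⟩))⟩
  left_inv f := Subtype.ext (funext fun x => rfl)
  right_inv p := Prod.ext (Subtype.ext rfl) (Subtype.ext rfl)

def shomCongr {X : SimpleGraph V} {X' : SimpleGraph V'} {Y : SimpleGraph W}
    {Y' : SimpleGraph W'} (eX : X ≃g X') (eY : Y ≃g Y') :
    SHom X Y ≃ SHom X' Y' where
  toFun f := ⟨eY ∘ f.1 ∘ eX.symm, (Iso.isSHom eY).comp (f.2.comp (Iso.isSHom eX.symm))⟩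
  invFun g := ⟨eY.symm ∘ g.1 ∘ eX, (Iso.isSHom eY.symm).comp (g.2.comp (Iso.isSHom eX))⟩
  left_inv f := Subtype.ext (funext fun x => by simp)
  right_inv g := Subtype.ext (funext fun x => by simp)

def ishomCongr {X : SimpleGraph V} {X' : SimpleGraph V'} {Y : SimpleGraph W}
    {Y' : SimpleGraph W'} (eX : X ≃g X') (eY : Y ≃g Y') :
    ISHom X Y ≃ ISHom X' Y' where
  toFun f := ⟨eY ∘ f.1 ∘ eX.symm,
    (Iso.isSHom eY).comp (f.2.1.comp (Iso.isSHom eX.symm)),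
    (eY.injective.comp f.2.2).comp eX.symm.injective⟩
  invFun g := ⟨eY.symm ∘ g.1 ∘ eX,
    (Iso.isSHom eY.symm).comp (g.2.1.comp (Iso.isSHom eX)),
    (eY.symm.injective.comp g.2.2).comp eX.injective⟩
  left_inv f := Subtype.ext (funext fun x => by simp)
  right_inv g := Subtype.ext (funext fun x => by simp)

section Counting
open Function

noncomputable def hcount (X : SimpleGraph V) (Y : SimpleGraph W) : ℕ :=
  Nat.card (SHom X Y)

noncomputable def icount (X : SimpleGraph V) (Y : SimpleGraph W) : ℕ :=
  Nat.card (ISHom X Y)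

lemma hcount_congr {X : SimpleGraph V} {X' : SimpleGraph V'} {Y : SimpleGraph W}
    {Y' : SimpleGraph W'} (eX : X ≃g X') (eY : Y ≃g Y') :
    hcount X Y = hcount X' Y' := Nat.card_congr (shomCongr eX eY)

lemma icount_congr {X : SimpleGraph V} {X' : SimpleGraph V'} {Y : SimpleGraph W}
    {Y' : SimpleGraph W'} (eX : X ≃g X') (eY : Y ≃g Y') :
    icount X Y = icount X' Y' := Nat.card_congr (ishomCongr eX eY)

lemma hcount_prod (X : SimpleGraph V) (G : SimpleGraph W) (H : SimpleGraph U) :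
    hcount X (strongProd G H) = hcount X G * hcount X H := by
  rw [hcount, Nat.card_congr (shomProdEquiv X G H), Nat.card_prod]; rfl

lemma hcount_pos {X : SimpleGraph V} {Y : SimpleGraph W} [Finite V] [Finite W]
    [Nonempty W] : 0 < hcount X Y := by
  have : Nonempty (SHom X Y) := ⟨⟨fun _ => Classical.arbitrary W, fun x y _ => Or.inl rfl⟩⟩
  exact Nat.card_pos

lemma icount_self_pos (X : SimpleGraph V) [Finite V] : 0 < icount X X := by
  have : Nonempty (ISHom X X) := ⟨⟨id, fun x y h => Or.inr h, fun _ _ h => h⟩⟩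
  exact Nat.card_pos

end Counting

section Quot

/-- Quotient graph by a partition. -/
def quotGraph (X : SimpleGraph V) (P : Setoid V) : SimpleGraph (Quotient P) where
  Adj u v := u ≠ v ∧ ∃ x y, Quotient.mk P x = u ∧ Quotient.mk P y = v ∧ X.Adj x y
  symm := by
    constructor
    rintro u v ⟨hne, x, y, hx, hy, hadj⟩
    exact ⟨hne.symm, y, x, hy, hx, hadj.symm⟩
  loopless := by constructor; rintro u ⟨hne, -⟩; exact hne rfl

instance [Finite V] : Finite (Setoid V) := by
  have hinj : Function.Injective (fun P : Setoid V => P.r) := by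
    rintro ⟨r1, h1⟩ ⟨r2, h2⟩ h
    obtain rfl : r1 = r2 := h
    rfl
  exact Finite.of_injective _ hinj

noncomputable instance [Finite V] : Fintype (Setoid V) := Fintype.ofFinite _

/-- SHoms with kernel `P` correspond to injective SHoms from the quotient graph. -/
noncomputable def kerFiberEquiv (X : SimpleGraph V) (Y : SimpleGraph W) (P : Setoid V) :
    {f : SHom X Y // Setoid.ker f.1 = P} ≃ ISHom (quotGraph X P) Y where
  toFun f :=
    ⟨Quotient.lift f.1.1 (fun a b hab => by rw [← f.2] at hab; exact hab), by
      rintro u v ⟨hne, x, y, hx, hy, hadj⟩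
      subst hx; subst hy
      rcases f.1.2 hadj with h1 | h1
      · refine absurd (Quotient.sound ?_) hne
        rw [← f.2]; exact h1
      · exact Or.inr h1, by
      intro u v huv
      induction u using Quotient.ind
      induction v using Quotient.ind
      refine Quotient.sound ?_
      rw [← f.2]
      exact huv⟩
  invFun g :=
    ⟨⟨fun x => g.1 (Quotient.mk P x), by
      intro x y hadj
      by_cases hq : Quotient.mk P x = Quotient.mk P y
      · exact Or.inl (congrArg g.1 hq)
      · rcases g.2.1 ⟨hq, x, y, rfl, rfl, hadj⟩ with h1 | h1
        · exact Or.inl h1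
        · exact Or.inr h1⟩, by
      refine Setoid.ext fun a b => ?_
      constructor
      · intro hab
        exact Quotient.exact (g.2.2 (hab : g.1 _ = g.1 _))
      · intro hab
        exact congrArg g.1 (Quotient.sound hab)⟩
  left_inv f := Subtype.ext (Subtype.ext (funext fun x => rfl))
  right_inv g := Subtype.ext (funext fun u => by
    induction u using Quotient.ind
    rfl)

lemma nat_card_sigma {ι : Type} [Fintype ι] (g : ι → Type) [∀ i, Finite (g i)] :
    Nat.card (Σ i, g i) = ∑ i, Nat.card (g i) := by
  letI : ∀ i, Fintype (g i) := fun i => Fintype.ofFinite _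
  simp [Nat.card_eq_fintype_card, Fintype.card_sigma]

lemma hcount_eq_sum_icount (X : SimpleGraph V) (Y : SimpleGraph W) [Fintype V] [Finite W] :
    hcount X Y = ∑ P : Setoid V, icount (quotGraph X P) Y := by
  have e : SHom X Y ≃ Σ P : Setoid V, ISHom (quotGraph X P) Y := by
    refine (Equiv.sigmaFiberEquiv (fun f : SHom X Y => Setoid.ker f.1)).symm.trans ?_
    exact Equiv.sigmaCongrRight fun P => kerFiberEquiv X Y P
  rw [hcount, Nat.card_congr e, nat_card_sigma]
  rfl

/-- The quotient by `⊥` is isomorphic to the original graph. -/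
noncomputable def quotBotIso (X : SimpleGraph V) : quotGraph X (⊥ : Setoid V) ≃g X := by
  have hbij : Function.Bijective (Quotient.mk (⊥ : Setoid V)) :=
    ⟨fun a b h => Quotient.exact h, Quotient.mk_surjective⟩
  refine ⟨(Equiv.ofBijective _ hbij).symm, ?_⟩
  intro u v
  constructor
  · intro h
    refine ⟨?_, (Equiv.ofBijective _ hbij).symm u, (Equiv.ofBijective _ hbij).symm v, ?_, ?_, h⟩
    · intro huv
      exact X.ne_of_adj h (by
        have := congrArg (Equiv.ofBijective _ hbij).symm huv
        simpa using this)
    · exact (Equiv.ofBijective _ hbij).apply_symm_apply u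
    · exact (Equiv.ofBijective _ hbij).apply_symm_apply v
  · rintro ⟨hne, x, y, hx, hy, hadj⟩
    subst hx; subst hy
    have hx' : (Equiv.ofBijective _ hbij).symm (Quotient.mk _ x) = x := by
      apply hbij.1; simp [(Equiv.ofBijective _ hbij).apply_symm_apply]
    have hy' : (Equiv.ofBijective _ hbij).symm (Quotient.mk _ y) = y := by
      apply hbij.1; simp [(Equiv.ofBijective _ hbij).apply_symm_apply]
    rw [hx', hy']
    exact hadj

lemma quot_card_lt (P : Setoid V) [Fintype V] (hP : P ≠ ⊥) :
    Nat.card (Quotient P) < Fintype.card V := by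
  have hsurj : Function.Surjective (Quotient.mk P) := Quotient.mk_surjective
  have hninj : ¬ Function.Injective (Quotient.mk P) := by
    intro hinj
    apply hP
    refine Setoid.ext fun a b => ?_
    constructor
    · intro hab; exact hinj (Quotient.sound hab)
    · rintro rfl; exact P.refl a
  have hle : Nat.card (Quotient P) ≤ Fintype.card V := by
    rw [← Nat.card_eq_fintype_card]
    exact Nat.card_le_card_of_surjective _ hsurj
  rcases hle.lt_or_eq with h | h
  · exact h
  · exfalso
    apply hninj
    haveI : Fintype (Quotient P) := Fintype.ofFinite _
    have hcard : Fintype.card V = Fintype.card (Quotient P) := by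
      rw [← h, Nat.card_eq_fintype_card]
    exact ((Fintype.bijective_iff_surjective_and_card _).2 ⟨hsurj, hcard⟩).1
end Quot

section Edges
open Function

lemma edge_mapsTo {X : SimpleGraph V} {Y : SimpleGraph W} {f : V → W}
    (hf : IsSHom X Y f) (hinj : Injective f) :
    Set.MapsTo (Sym2.map f) X.edgeSet Y.edgeSet := by
  intro e he
  induction e with
  | _ x y =>
    rw [SimpleGraph.mem_edgeSet] at he
    rw [Sym2.map_pair_eq, SimpleGraph.mem_edgeSet]
    rcases hf he with h1 | h1
    · exact absurd (hinj h1) (X.ne_of_adj he)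
    · exact h1

lemma edge_card_le {X : SimpleGraph V} {Y : SimpleGraph W} [Finite W] {f : V → W}
    (hf : IsSHom X Y f) (hinj : Injective f) :
    Nat.card X.edgeSet ≤ Nat.card Y.edgeSet := by
  have hmap := edge_mapsTo hf hinj
  have : Injective (fun e : X.edgeSet => (⟨Sym2.map f e.1, hmap e.2⟩ : Y.edgeSet)) := by
    intro e1 e2 h
    exact Subtype.ext (Sym2.map.injective hinj (congrArg Subtype.val h))
  exact Nat.card_le_card_of_injective _ this

/-- A bijective strong hom with as many edges in the source as the target is an iso. -/
lemma iso_of_bij_shom_edge {X : SimpleGraph V} {Y : SimpleGraph W} [Fintype V] [Fintype W]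
    {f : V → W} (hf : IsSHom X Y f) (hinj : Injective f)
    (hcardV : Fintype.card V = Fintype.card W)
    (hedge : Nat.card Y.edgeSet ≤ Nat.card X.edgeSet) : Nonempty (X ≃g Y) := by
  have hbij : Bijective f := (Fintype.bijective_iff_injective_and_card f).2 ⟨hinj, hcardV⟩
  have hmap := edge_mapsTo hf hinj
  set F : X.edgeSet → Y.edgeSet := fun e => ⟨Sym2.map f e.1, hmap e.2⟩ with hF
  have hFinj : Injective F := by
    intro e1 e2 h
    exact Subtype.ext (Sym2.map.injective hinj (congrArg Subtype.val h))
  have hFsurj : Surjective F := by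
    haveI : Fintype X.edgeSet := Fintype.ofFinite _
    haveI : Fintype Y.edgeSet := Fintype.ofFinite _
    have hcard : Fintype.card X.edgeSet = Fintype.card Y.edgeSet := by
      have h1 := Nat.card_le_card_of_injective F hFinj
      simp only [Nat.card_eq_fintype_card] at h1 hedge
      omega
    exact ((Fintype.bijective_iff_injective_and_card F).2 ⟨hFinj, hcard⟩).2
  refine ⟨⟨Equiv.ofBijective f hbij, ?_⟩⟩
  intro x y
  show Y.Adj (f x) (f y) ↔ X.Adj x y
  constructor
  · intro h
    obtain ⟨⟨e, he⟩, hFe⟩ := hFsurj ⟨s(f x, f y), h⟩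
    induction e with
    | _ a b =>
      have : Sym2.map f s(a, b) = Sym2.map f s(x, y) := by
        rw [Sym2.map_pair_eq]
        exact congrArg Subtype.val hFe
      have hab : s(a, b) = s(x, y) := Sym2.map.injective hinj this
      rw [SimpleGraph.mem_edgeSet] at he
      rw [← SimpleGraph.mem_edgeSet, ← hab, SimpleGraph.mem_edgeSet]
      exact he
  · intro h
    rcases hf h with h1 | h1
    · exact absurd (hinj h1) (X.ne_of_adj h)
    · exact h1

end Edges

section GClass
open Function

abbrev GRep : Type := Σ n, SimpleGraph (Fin n)

def isoRefl (X : SimpleGraph V) : X ≃g X := ⟨Equiv.refl V, Iff.rfl⟩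

def grel (G H : GRep) : Prop := Nonempty (G.2 ≃g H.2)

instance gsetoid : Setoid GRep :=
  ⟨grel,
   ⟨fun G => ⟨isoRefl _⟩,
    fun h => ⟨h.some.symm⟩,
    fun h1 h2 => ⟨h1.some.trans h2.some⟩⟩⟩

def GClass : Type := Quotient gsetoid

lemma gsound {G H : GRep} (h : Nonempty (G.2 ≃g H.2)) : (⟦G⟧ : GClass) = ⟦H⟧ :=
  Quotient.sound h

lemma gexact {G H : GRep} (h : (⟦G⟧ : GClass) = ⟦H⟧) : Nonempty (G.2 ≃g H.2) :=
  Quotient.exact h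

/-- Transport of a graph along an equiv, as an iso. -/
def comapIso {α β : Type} (e : α ≃ β) (G : SimpleGraph β) : G.comap e ≃g G :=
  ⟨e, Iff.rfl⟩

def strongProdCongr {α β α' β' : Type} {G : SimpleGraph α} {G' : SimpleGraph α'}
    {H : SimpleGraph β} {H' : SimpleGraph β'} (e1 : G ≃g G') (e2 : H ≃g H') :
    strongProd G H ≃g strongProd G' H' := by
  refine ⟨Equiv.prodCongr e1.toEquiv e2.toEquiv, ?_⟩
  rintro ⟨a, c⟩ ⟨b, d⟩
  show (strongProd G' H').Adj (e1 a, e2 c) (e1 b, e2 d) ↔ _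
  simp only [strongProd, e1.map_adj_iff, e2.map_adj_iff, EmbeddingLike.apply_eq_iff_eq]

def grepMul (G H : GRep) : GRep :=
  ⟨G.1 * H.1, (strongProd G.2 H.2).comap finProdFinEquiv.symm⟩

def grepMulIso (G H : GRep) : (grepMul G H).2 ≃g strongProd G.2 H.2 :=
  comapIso _ _

def mulc : GClass → GClass → GClass :=
  Quotient.map₂ grepMul (by
    rintro G G' h1 H H' h2
    obtain ⟨e1⟩ := (h1 : grel G G')
    obtain ⟨e2⟩ := (h2 : grel H H')
    exact (⟨(grepMulIso G H).trans ((strongProdCongr e1 e2).trans (grepMulIso G' H').symm)⟩ :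
      grel _ _))

def sizec : GClass → ℕ :=
  Quotient.lift (fun G : GRep => G.1) (by
    rintro G H h
    obtain ⟨e⟩ := (h : grel G H)
    simpa using Fintype.card_congr e.toEquiv)

noncomputable def edgec : GClass → ℕ :=
  Quotient.lift (fun G : GRep => Nat.card G.2.edgeSet) (by
    rintro G H h
    obtain ⟨e⟩ := (h : grel G H)
    exact Nat.card_congr e.mapEdgeSet)

noncomputable def hc (X : SimpleGraph V) : GClass → ℕ :=
  Quotient.lift (fun G : GRep => hcount X G.2) (by
    rintro G H h
    obtain ⟨e⟩ := (h : grel G H)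
    exact hcount_congr (isoRefl X) e)

noncomputable def ic (X : SimpleGraph V) : GClass → ℕ :=
  Quotient.lift (fun G : GRep => icount X G.2) (by
    rintro G H h
    obtain ⟨e⟩ := (h : grel G H)
    exact icount_congr (isoRefl X) e)

noncomputable def classOf (G : SimpleGraph V) [Fintype V] : GClass :=
  ⟦⟨Fintype.card V, G.comap (Fintype.equivFin V).symm⟩⟧

noncomputable def classOfIso (G : SimpleGraph V) [Fintype V] :
    ((⟨Fintype.card V, G.comap (Fintype.equivFin V).symm⟩ : GRep)).2 ≃g G :=
  comapIso _ _

lemma classOf_eq_of_iso {G : SimpleGraph V} {H : SimpleGraph W} [Fintype V] [Fintype W]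
    (e : G ≃g H) : classOf G = classOf H :=
  gsound ⟨(classOfIso G).trans (e.trans (classOfIso H).symm)⟩

lemma iso_of_classOf_eq {G : SimpleGraph V} {H : SimpleGraph W} [Fintype V] [Fintype W]
    (h : classOf G = classOf H) : Nonempty (G ≃g H) := by
  obtain ⟨e⟩ := gexact h
  exact ⟨(classOfIso G).symm.trans (e.trans (classOfIso H))⟩

lemma sizec_classOf (G : SimpleGraph V) [Fintype V] : sizec (classOf G) = Fintype.card V :=
  rfl

lemma classOf_strongProd (G : SimpleGraph V) (H : SimpleGraph W) [Fintype V] [Fintype W] :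
    classOf (strongProd G H) = mulc (classOf G) (classOf H) := by
  have : mulc (classOf G) (classOf H) =
      ⟦grepMul ⟨Fintype.card V, G.comap (Fintype.equivFin V).symm⟩
        ⟨Fintype.card W, H.comap (Fintype.equivFin W).symm⟩⟧ := rfl
  rw [this]
  refine gsound ⟨(classOfIso (strongProd G H)).trans ?_⟩
  exact ((grepMulIso _ _).trans (strongProdCongr (classOfIso G) (classOfIso H))).symm

lemma sizec_mulc (q1 q2 : GClass) : sizec (mulc q1 q2) = sizec q1 * sizec q2 := by
  induction q1 using Quotient.ind
  induction q2 using Quotient.ind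
  rfl

lemma hc_classOf (X : SimpleGraph V) (Y : SimpleGraph W) [Fintype W] :
    hc X (classOf Y) = hcount X Y :=
  hcount_congr (isoRefl X) (classOfIso Y)

lemma ic_classOf (X : SimpleGraph V) (Y : SimpleGraph W) [Fintype W] :
    ic X (classOf Y) = icount X Y :=
  icount_congr (isoRefl X) (classOfIso Y)

lemma hc_mulc (X : SimpleGraph V) (q1 q2 : GClass) :
    hc X (mulc q1 q2) = hc X q1 * hc X q2 := by
  induction q1 using Quotient.ind with | _ G =>
  induction q2 using Quotient.ind with | _ H =>
  show hcount X (grepMul G H).2 = hcount X G.2 * hcount X H.2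
  rw [hcount_congr (isoRefl X) (grepMulIso G H), hcount_prod]

lemma hc_pos (X : SimpleGraph V) [Finite V] {q : GClass} (hq : 1 ≤ sizec q) :
    0 < hc X q := by
  induction q using Quotient.ind with | _ G =>
  show 0 < hcount X G.2
  have : 1 ≤ G.1 := hq
  haveI : Nonempty (Fin G.1) := ⟨⟨0, this⟩⟩
  exact hcount_pos

lemma sizec_out (q : GClass) : sizec q = q.out.1 := by
  conv_lhs => rw [← Quotient.out_eq q]
  rfl


lemma finite_sizec_eq (n : ℕ) : {q : GClass | sizec q = n}.Finite := by
  have : {q : GClass | sizec q = n} ⊆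
      Set.range (fun G : SimpleGraph (Fin n) => (⟦⟨n, G⟩⟧ : GClass)) := by
    intro q hq
    have h1 : q.out.1 = n := by rw [← sizec_out]; exact hq
    refine ⟨q.out.2.comap (finCongr h1.symm), ?_⟩
    refine (gsound ⟨comapIso (finCongr h1.symm) q.out.2⟩).trans (Quotient.out_eq q)
  haveI hfin : Finite (SimpleGraph (Fin n)) := by
    refine Finite.of_injective (fun G => G.Adj) ?_
    intro G H h
    exact SimpleGraph.ext h
  exact (Set.finite_range _).subset this

end GClass

section Core
open Function Finset

lemma hc_out (X : SimpleGraph V) (q : GClass) : hc X q = hcount X q.out.2 := by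
  conv_lhs => rw [← Quotient.out_eq q]
  rfl

lemma ic_out (X : SimpleGraph V) (q : GClass) : ic X q = icount X q.out.2 := by
  conv_lhs => rw [← Quotient.out_eq q]
  rfl

lemma edgec_out (q : GClass) : edgec q = Nat.card q.out.2.edgeSet := by
  conv_lhs => rw [← Quotient.out_eq q]
  rfl

lemma eq_of_out_iso {q1 q2 : GClass} (h : Nonempty (q1.out.2 ≃g q2.out.2)) : q1 = q2 := by
  rw [← Quotient.out_eq q1, ← Quotient.out_eq q2]
  exact gsound h

lemma hc_eq_sum_ic (X : SimpleGraph V) [Fintype V] (q : GClass) :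
    hc X q = ∑ P : Setoid V, ic (quotGraph X P) q := by
  induction q using Quotient.ind with | _ G =>
  exact hcount_eq_sum_icount X G.2

lemma ic_congr_left {X : SimpleGraph V} {X' : SimpleGraph V'} (e : X ≃g X') (q : GClass) :
    ic X q = ic X' q := by
  induction q using Quotient.ind with | _ G =>
  exact icount_congr e (isoRefl _)

/-- Triangularity of injective counts. -/
lemma ic_triangle {q1 q2 : GClass} (h : ic q1.out.2 q2 ≠ 0) (hsz : sizec q1 = sizec q2) :
    edgec q1 ≤ edgec q2 ∧ (edgec q2 ≤ edgec q1 → q1 = q2) := by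
  rw [ic_out] at h
  obtain ⟨⟨⟨f, hf, hfinj⟩⟩, -⟩ := Nat.card_ne_zero.1 h
  have hcard : Fintype.card (Fin q1.out.1) = Fintype.card (Fin q2.out.1) := by
    simp only [Fintype.card_fin]
    rw [← sizec_out, ← sizec_out, hsz]
  constructor
  · rw [edgec_out, edgec_out]
    exact edge_card_le hf hfinj
  · intro hle
    refine eq_of_out_iso (iso_of_bij_shom_edge hf hfinj hcard ?_)
    rw [edgec_out, edgec_out] at hle
    exact hle

open scoped Classical in
/-- The key cancellation lemma (Lovász counting argument). -/
lemma core_cancel (n k : ℕ) (hk : 1 ≤ k)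
    (r s t : GClass → ℕ)
    (ht : ∀ j, t j ≠ 0 → sizec j = k)
    (htne : ∃ j, t j ≠ 0)
    (U T : Finset GClass)
    (hrU : ∀ i, r i ≠ 0 → i ∈ U) (hsU : ∀ i, s i ≠ 0 → i ∈ U)
    (htT : ∀ j, t j ≠ 0 → j ∈ T)
    (hU : ∀ i ∈ U, sizec i = n)
    (H : ∀ q : GClass,
      (∑ p ∈ U ×ˢ T, if mulc p.1 p.2 = q then r p.1 * t p.2 else 0) =
      (∑ p ∈ U ×ˢ T, if mulc p.1 p.2 = q then s p.1 * t p.2 else 0)) :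
    r = s := by
  classical
  -- Step 1: equality of weighted hom counts.
  have step1 : ∀ (V : Type) [Fintype V] (X : SimpleGraph V),
      (∑ i ∈ U, r i * hc X i) = ∑ i ∈ U, s i * hc X i := by
    intro V _ X
    have key : ∀ u : GClass → ℕ,
        (∑ i ∈ U, u i * hc X i) * (∑ j ∈ T, t j * hc X j) =
        ∑ p ∈ U ×ˢ T, u p.1 * t p.2 * hc X (mulc p.1 p.2) := by
      intro u
      rw [Finset.sum_mul_sum]
      rw [← Finset.sum_product']
      refine Finset.sum_congr rfl ?_
      rintro ⟨i, j⟩ -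
      rw [hc_mulc]
      ring
    have hQ : ∀ u : GClass → ℕ,
        (∑ p ∈ U ×ˢ T, u p.1 * t p.2 * hc X (mulc p.1 p.2)) =
        ∑ q ∈ (U ×ˢ T).image (fun p => mulc p.1 p.2),
          hc X q * ∑ p ∈ U ×ˢ T, (if mulc p.1 p.2 = q then u p.1 * t p.2 else 0) := by
      intro u
      refine ((Finset.sum_fiberwise_of_maps_to (g := fun p : GClass × GClass => mulc p.1 p.2)
        (fun p hp => Finset.mem_image_of_mem _ hp)
        (fun p => u p.1 * t p.2 * hc X (mulc p.1 p.2))).symm).trans ?_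
      refine Finset.sum_congr rfl fun q hq => ?_
      rw [← Finset.sum_filter, Finset.mul_sum]
      refine Finset.sum_congr rfl fun p hp => ?_
      rw [(Finset.mem_filter.1 hp).2]
      ring
    have hmul : (∑ i ∈ U, r i * hc X i) * (∑ j ∈ T, t j * hc X j) =
        (∑ i ∈ U, s i * hc X i) * (∑ j ∈ T, t j * hc X j) := by
      rw [key r, key s, hQ r, hQ s]
      refine Finset.sum_congr rfl fun q hq => ?_
      rw [H q]
    have hpos : 0 < ∑ j ∈ T, t j * hc X j := by
      obtain ⟨j0, hj0⟩ := htne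
      refine Finset.sum_pos' (fun j _ => Nat.zero_le _) ⟨j0, htT j0 hj0, ?_⟩
      have h1 : 0 < hc X j0 := hc_pos X (by rw [ht j0 hj0]; exact hk)
      exact Nat.mul_pos (Nat.pos_of_ne_zero hj0) h1
    exact Nat.eq_of_mul_eq_mul_right hpos hmul
  -- Step 2: equality of weighted injective counts, by induction on the size of X.
  have step2 : ∀ (m : ℕ) (V : Type) [Fintype V], Fintype.card V ≤ m → ∀ X : SimpleGraph V,
      (∑ i ∈ U, r i * ic X i) = ∑ i ∈ U, s i * ic X i := by
    intro m
    induction m with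
    | zero =>
      intro V _ hcard X
      haveI : IsEmpty V := Fintype.card_eq_zero_iff.1 (Nat.le_zero.1 hcard)
      -- card V = 0: quotient by ⊥ trick still works, but easier: direct
      have : ∀ u : GClass → ℕ, (∑ i ∈ U, u i * ic X i) = ∑ i ∈ U, u i * hc X i := by
        intro u
        refine Finset.sum_congr rfl fun q hq => ?_
        congr 1
        rw [ic_out, hc_out, icount, hcount]
        refine Nat.card_congr (Equiv.subtypeEquiv (Equiv.refl _) fun f => ?_)
        simp only [Equiv.refl_apply]
        constructor
        · exact fun h => h.1
        · intro h
          exact ⟨h, fun x => isEmptyElim x⟩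
      rw [this r, this s]
      exact step1 V X
    | succ m ih =>
      intro V _ hcard X
      rcases Nat.lt_or_ge (Fintype.card V) (m + 1) with h | h
      · exact ih V (Nat.lt_succ_iff.1 h) X
      have hcV : Fintype.card V = m + 1 := le_antisymm hcard h
      have hsplit : ∀ u : GClass → ℕ,
          (∑ i ∈ U, u i * hc X i) =
          (∑ i ∈ U, u i * ic X i) +
            ∑ P ∈ (Finset.univ : Finset (Setoid V)).erase ⊥,
              ∑ i ∈ U, u i * ic (quotGraph X P) i := by
        intro u
        have h1 : (∑ i ∈ U, u i * hc X i) =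
            ∑ P : Setoid V, ∑ i ∈ U, u i * ic (quotGraph X P) i := by
          rw [Finset.sum_comm]
          refine Finset.sum_congr rfl fun i _ => ?_
          rw [hc_eq_sum_ic, Finset.mul_sum]
        rw [h1, ← Finset.add_sum_erase _ _ (Finset.mem_univ (⊥ : Setoid V))]
        congr 1
        refine Finset.sum_congr rfl fun i _ => ?_
        rw [ic_congr_left (quotBotIso X) i]
      have hrest : ∀ P ∈ (Finset.univ : Finset (Setoid V)).erase ⊥,
          (∑ i ∈ U, r i * ic (quotGraph X P) i) =
          ∑ i ∈ U, s i * ic (quotGraph X P) i := by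
        intro P hP
        haveI : Fintype (Quotient P) := Fintype.ofFinite _
        have hlt : Fintype.card (Quotient P) ≤ m := by
          have := quot_card_lt P (Finset.ne_of_mem_erase hP)
          rw [Nat.card_eq_fintype_card] at this
          omega
        exact ih (Quotient P) hlt (quotGraph X P)
      have := step1 V X
      rw [hsplit r, hsplit s, Finset.sum_congr rfl hrest] at this
      exact Nat.add_right_cancel this
  -- Step 3: conclude.
  by_contra hne
  have hex : ∃ q, r q ≠ s q := by
    by_contra hq
    push_neg at hq
    exact hne (funext hq)
  set D : Finset GClass := U.filter (fun i => r i ≠ s i) with hD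
  have hDne : D.Nonempty := by
    obtain ⟨q, hq⟩ := hex
    have hqU : q ∈ U := by
      rcases Nat.eq_zero_or_pos (r q) with h0 | h0
      · exact hsU q (by omega)
      · exact hrU q (by omega)
    exact ⟨q, Finset.mem_filter.2 ⟨hqU, hq⟩⟩
  obtain ⟨qs, hqsD, hqsmax⟩ := Finset.exists_max_image D edgec hDne
  have hqsU : qs ∈ U := (Finset.mem_filter.1 hqsD).1
  have hqsne : r qs ≠ s qs := (Finset.mem_filter.1 hqsD).2
  have hsz : ∀ i ∈ U, i ≠ qs → r i * ic qs.out.2 i = s i * ic qs.out.2 i := by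
    intro i hiU hine
    by_cases hrs : r i = s i
    · rw [hrs]
    · -- i ∈ D, i ≠ qs : show ic = 0
      have hiD : i ∈ D := Finset.mem_filter.2 ⟨hiU, hrs⟩
      by_cases hic : ic qs.out.2 i = 0
      · rw [hic, Nat.mul_zero, Nat.mul_zero]
      · exfalso
        have hsizes : sizec qs = sizec i := by
          rw [hU qs hqsU, hU i hiU]
        obtain ⟨h1, h2⟩ := ic_triangle hic hsizes
        exact hine (h2 (hqsmax i hiD)).symm
  have heq := step2 (Fintype.card (Fin qs.out.1)) (Fin qs.out.1) le_rfl qs.out.2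
  rw [← Finset.add_sum_erase _ _ hqsU, ← Finset.add_sum_erase _ _ hqsU] at heq
  have hrest2 : (∑ i ∈ U.erase qs, r i * ic qs.out.2 i) =
      ∑ i ∈ U.erase qs, s i * ic qs.out.2 i :=
    Finset.sum_congr rfl fun i hi =>
      hsz i (Finset.mem_of_mem_erase hi) (Finset.ne_of_mem_erase hi)
  rw [hrest2] at heq
  have hcancel := Nat.add_right_cancel heq
  have hicpos : 0 < ic qs.out.2 qs := by
    rw [ic_out]
    exact icount_self_pos _
  exact hqsne (Nat.eq_of_mul_eq_mul_right hicpos hcancel)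

end Core

section Components
open SimpleGraph Function

variable {G : SimpleGraph V} {H : SimpleGraph W}

lemma strongProd_reachable_fst {A : SimpleGraph V} {C : SimpleGraph W} {p q : V × W}
    (h : (strongProd A C).Reachable p q) : A.Reachable p.1 q.1 ∧ C.Reachable p.2 q.2 := by
  obtain ⟨w⟩ := h
  induction w with
  | nil => exact ⟨Reachable.refl _, Reachable.refl _⟩
  | cons h w ih =>
    rename_i a b c
    refine ⟨Reachable.trans ?_ ih.1, Reachable.trans ?_ ih.2⟩
    · rcases h with ⟨heq, -⟩ | ⟨hadj, -⟩ | ⟨hadj, -⟩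
      · rw [heq]
      · exact hadj.reachable
      · exact hadj.reachable
    · rcases h with ⟨-, hadj⟩ | ⟨-, heq⟩ | ⟨-, hadj⟩
      · exact hadj.reachable
      · rw [heq]
      · exact hadj.reachable

lemma strongProd_reachable_of {A : SimpleGraph V} {C : SimpleGraph W} {a b : V} {c d : W}
    (h1 : A.Reachable a b) (h2 : C.Reachable c d) :
    (strongProd A C).Reachable (a, c) (b, d) := by
  have step1 : ∀ (x y : V) (z : W), A.Reachable x y → (strongProd A C).Reachable (x, z) (y, z) := by
    intro x y z hxy
    obtain ⟨w⟩ := hxy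
    induction w with
    | nil => exact Reachable.refl _
    | cons h w ih =>
      rename_i u1 u2 u3
      have hadj : (strongProd A C).Adj (u1, z) (u2, z) := Or.inr (Or.inl ⟨h, rfl⟩)
      exact Reachable.trans hadj.reachable ih
  have step2 : ∀ (x : V) (z u : W), C.Reachable z u → (strongProd A C).Reachable (x, z) (x, u) := by
    intro x z u hzu
    obtain ⟨w⟩ := hzu
    induction w with
    | nil => exact Reachable.refl _
    | cons h w ih =>
      rename_i u1 u2 u3
      have hadj : (strongProd A C).Adj (x, u1) (x, u2) := Or.inl ⟨rfl, h⟩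
      exact Reachable.trans hadj.reachable ih
  exact Reachable.trans (step1 a b c h1) (step2 b c d h2)

lemma strongProd_reachable_iff {A : SimpleGraph V} {C : SimpleGraph W} {p q : V × W} :
    (strongProd A C).Reachable p q ↔ A.Reachable p.1 q.1 ∧ C.Reachable p.2 q.2 := by
  constructor
  · exact strongProd_reachable_fst
  · intro ⟨h1, h2⟩
    have := strongProd_reachable_of h1 h2
    rwa [Prod.mk.eta, Prod.mk.eta] at this

/-- Components of a strong product = pairs of components. -/
noncomputable def prodCompEquiv (A : SimpleGraph V) (C : SimpleGraph W) :
    (strongProd A C).ConnectedComponent ≃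
      A.ConnectedComponent × C.ConnectedComponent where
  toFun := Quot.lift (fun p => (A.connectedComponentMk p.1, C.connectedComponentMk p.2))
    (by
      rintro p q h
      have h2 := strongProd_reachable_fst h
      exact Prod.ext (ConnectedComponent.sound h2.1) (ConnectedComponent.sound h2.2))
  invFun := fun pc =>
    Quot.liftOn pc.1 (fun a =>
      Quot.liftOn pc.2 (fun c => (strongProd A C).connectedComponentMk (a, c))
        (fun c d h => ConnectedComponent.sound
          (strongProd_reachable_of (Reachable.refl a) h)))
      (fun a b h => by
        induction pc.2 using ConnectedComponent.ind with | _ c =>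
        exact ConnectedComponent.sound
          (strongProd_reachable_of h (Reachable.refl c)))
  left_inv := by
    intro d
    induction d using ConnectedComponent.ind with | _ p =>
    rfl
  right_inv := by
    rintro ⟨c1, c2⟩
    induction c1 using ConnectedComponent.ind with | _ a =>
    induction c2 using ConnectedComponent.ind with | _ c =>
    rfl

lemma supp_prodComp {A : SimpleGraph V} {C : SimpleGraph W} (a : V) (c : W) :
    ((strongProd A C).connectedComponentMk (a, c)).supp =
      (A.connectedComponentMk a).supp ×ˢ (C.connectedComponentMk c).supp := by
  ext ⟨x, y⟩
  simp only [ConnectedComponent.mem_supp_iff, Set.mem_prod, ConnectedComponent.eq]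
  exact ⟨fun h => strongProd_reachable_fst h, fun ⟨h1, h2⟩ => by
    simpa using strongProd_reachable_of h1 h2⟩

/-- Induced graph on a product set. -/
def induceProdIso (A : SimpleGraph V) (C : SimpleGraph W) (s : Set V) (t : Set W) :
    (strongProd A C).induce (s ×ˢ t) ≃g strongProd (A.induce s) (C.induce t) where
  toFun x := (⟨x.1.1, x.2.1⟩, ⟨x.1.2, x.2.2⟩)
  invFun p := ⟨(p.1.1, p.2.1), ⟨p.1.2, p.2.2⟩⟩
  left_inv x := rfl
  right_inv p := rfl
  map_rel_iff' := by
    rintro ⟨⟨a, c⟩, ha⟩ ⟨⟨b, d⟩, hb⟩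
    constructor
    · rintro (⟨h1, h2⟩ | ⟨h1, h2⟩ | ⟨h1, h2⟩)
      · exact Or.inl ⟨congrArg Subtype.val h1, h2⟩
      · exact Or.inr (Or.inl ⟨h1, congrArg Subtype.val h2⟩)
      · exact Or.inr (Or.inr ⟨h1, h2⟩)
    · rintro (⟨h1, h2⟩ | ⟨h1, h2⟩ | ⟨h1, h2⟩)
      · exact Or.inl ⟨Subtype.ext h1, h2⟩
      · exact Or.inr (Or.inl ⟨h1, Subtype.ext h2⟩)
      · exact Or.inr (Or.inr ⟨h1, h2⟩)

/-- Components transfer along an iso. -/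
noncomputable def isoCompEquiv (φ : G ≃g H) :
    G.ConnectedComponent ≃ H.ConnectedComponent where
  toFun := Quot.lift (fun v => H.connectedComponentMk (φ v))
    (fun a b h => ConnectedComponent.sound (h.map φ.toHom))
  invFun := Quot.lift (fun w => G.connectedComponentMk (φ.symm w))
    (fun a b h => ConnectedComponent.sound (h.map φ.symm.toHom))
  left_inv := by
    intro c
    induction c using ConnectedComponent.ind with | _ v =>
    exact congrArg G.connectedComponentMk (φ.toEquiv.symm_apply_apply v)
  right_inv := by
    intro c
    induction c using ConnectedComponent.ind with | _ w =>
    exact congrArg H.connectedComponentMk (φ.toEquiv.apply_symm_apply w)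

lemma supp_isoCompEquiv (φ : G ≃g H) (c : G.ConnectedComponent) :
    (isoCompEquiv φ c).supp = ⇑φ '' c.supp := by
  induction c using ConnectedComponent.ind with | _ v =>
  ext w
  simp only [ConnectedComponent.mem_supp_iff, Set.mem_image]
  have hval : (isoCompEquiv φ) (G.connectedComponentMk v) = H.connectedComponentMk (φ v) := rfl
  rw [hval]
  constructor
  · intro h
    refine ⟨φ.symm w, ?_, φ.toEquiv.apply_symm_apply w⟩
    rw [ConnectedComponent.eq] at h ⊢
    have := h.map φ.symm.toHom
    have h2 : φ.symm (φ v) = v := φ.toEquiv.symm_apply_apply v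
    rw [show (φ.symm.toHom : W → V) = ⇑φ.symm from rfl] at this
    rw [h2] at this
    exact this
  · rintro ⟨x, hx, rfl⟩
    rw [ConnectedComponent.eq] at hx ⊢
    exact hx.map φ.toHom

/-- An iso restricts to an iso on induced subgraphs. -/
def isoInduceImage (φ : G ≃g H) (s : Set V) : G.induce s ≃g H.induce (⇑φ '' s) where
  toFun x := ⟨φ x.1, ⟨x.1, x.2, rfl⟩⟩
  invFun y := ⟨φ.symm y.1, by
    obtain ⟨x, hx, hxy⟩ := y.2
    have : φ.symm y.1 = x := by rw [← hxy]; exact φ.toEquiv.symm_apply_apply x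
    rw [this]; exact hx⟩
  left_inv x := Subtype.ext (φ.toEquiv.symm_apply_apply x.1)
  right_inv y := Subtype.ext (φ.toEquiv.apply_symm_apply y.1)
  map_rel_iff' := by
    rintro ⟨a, ha⟩ ⟨b, hb⟩
    exact φ.map_adj_iff

/-- Rewriting the underlying set of an induced subgraph. -/
def induceCongrSet {s t : Set V} (h : s = t) : G.induce s ≃g G.induce t := by
  subst h
  exact isoRefl _

end Components

section Mult
open SimpleGraph Function

variable {G : SimpleGraph V} {H : SimpleGraph W}

/-- The isomorphism class of a connected component. -/
noncomputable def cClass (G : SimpleGraph V)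
    (hfin : ∀ c : G.ConnectedComponent, c.supp.Finite) (c : G.ConnectedComponent) : GClass :=
  haveI := (hfin c).fintype
  classOf (G.induce c.supp)

/-- Number of components in a given isomorphism class. -/
noncomputable def mult (G : SimpleGraph V)
    (hfin : ∀ c : G.ConnectedComponent, c.supp.Finite) (q : GClass) : ℕ :=
  Nat.card {c : G.ConnectedComponent // cClass G hfin c = q}

lemma classOf_indep (G : SimpleGraph V) (i1 i2 : Fintype V) :
    @classOf V G i1 = @classOf V G i2 :=
  @classOf_eq_of_iso V V G G i1 i2 (isoRefl G)

lemma cClass_eq (G : SimpleGraph V) (hfin : ∀ c : G.ConnectedComponent, c.supp.Finite)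
    (c : G.ConnectedComponent) [inst : Fintype ↥c.supp] :
    cClass G hfin c = classOf (G.induce c.supp) :=
  classOf_indep (G.induce c.supp) (hfin c).fintype inst

lemma sizec_cClass (hfin : ∀ c : G.ConnectedComponent, c.supp.Finite)
    (c : G.ConnectedComponent) : sizec (cClass G hfin c) = Nat.card c.supp := by
  haveI := (hfin c).fintype
  rw [cClass_eq G hfin c, sizec_classOf, Nat.card_eq_fintype_card]

lemma one_le_sizec_cClass (hfin : ∀ c : G.ConnectedComponent, c.supp.Finite)
    (c : G.ConnectedComponent) : 1 ≤ sizec (cClass G hfin c) := by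
  rw [sizec_cClass]
  haveI := (hfin c).fintype
  haveI : Nonempty c.supp := by
    induction c using ConnectedComponent.ind with | _ v =>
    exact ⟨⟨v, rfl⟩⟩
  exact Nat.card_pos

lemma cClass_eq_iff_iso (hfinG : ∀ c : G.ConnectedComponent, c.supp.Finite)
    (hfinH : ∀ c : H.ConnectedComponent, c.supp.Finite)
    (c : G.ConnectedComponent) (d : H.ConnectedComponent) :
    cClass G hfinG c = cClass H hfinH d ↔
      Nonempty (G.induce c.supp ≃g H.induce d.supp) := by
  haveI := (hfinG c).fintype
  haveI := (hfinH d).fintype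
  rw [cClass_eq G hfinG c, cClass_eq H hfinH d]
  exact ⟨fun h => iso_of_classOf_eq h, fun ⟨e⟩ => classOf_eq_of_iso e⟩

lemma mult_fiber_finite (hfin : ∀ c : G.ConnectedComponent, c.supp.Finite)
    (hmult : ∀ c : G.ConnectedComponent,
      {c' : G.ConnectedComponent |
        Nonempty (G.induce c.supp ≃g G.induce c'.supp)}.Finite) (q : GClass) :
    Finite {c : G.ConnectedComponent // cClass G hfin c = q} := by
  rcases isEmpty_or_nonempty {c : G.ConnectedComponent // cClass G hfin c = q} with h | h
  · exact @Finite.of_subsingleton _ (by haveI := h; infer_instance)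
  · obtain ⟨⟨c0, hc0⟩⟩ := h
    haveI := (hmult c0).to_subtype
    refine Finite.of_injective
      (fun x => (⟨x.1, (cClass_eq_iff_iso hfin hfin c0 x.1).1 (hc0.trans x.2.symm)⟩ :
        {c' : G.ConnectedComponent |
        Nonempty (G.induce c0.supp ≃g G.induce c'.supp)})) ?_
    intro x y hxy
    apply Subtype.ext
    simpa using hxy

lemma mult_ne_zero_iff (hfin : ∀ c : G.ConnectedComponent, c.supp.Finite)
    (hmult : ∀ c : G.ConnectedComponent,
      {c' : G.ConnectedComponent |
        Nonempty (G.induce c.supp ≃g G.induce c'.supp)}.Finite) (q : GClass) :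
    mult G hfin q ≠ 0 ↔ ∃ c, cClass G hfin c = q := by
  haveI := mult_fiber_finite hfin hmult q
  rw [mult, Nat.card_ne_zero]
  constructor
  · rintro ⟨⟨c, hc⟩, -⟩
    exact ⟨c, hc⟩
  · rintro ⟨c, hc⟩
    exact ⟨⟨⟨c, hc⟩⟩, inferInstance⟩

lemma one_le_sizec_of_mult_ne_zero (hfin : ∀ c : G.ConnectedComponent, c.supp.Finite)
    (hmult : ∀ c : G.ConnectedComponent,
      {c' : G.ConnectedComponent |
        Nonempty (G.induce c.supp ≃g G.induce c'.supp)}.Finite) {q : GClass}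
    (h : mult G hfin q ≠ 0) : 1 ≤ sizec q := by
  obtain ⟨c, rfl⟩ := (mult_ne_zero_iff hfin hmult q).1 h
  exact one_le_sizec_cClass hfin c

lemma comps_sizec_eq_finite (hfin : ∀ c : G.ConnectedComponent, c.supp.Finite)
    (hmult : ∀ c : G.ConnectedComponent,
      {c' : G.ConnectedComponent |
        Nonempty (G.induce c.supp ≃g G.induce c'.supp)}.Finite) (n : ℕ) :
    {c : G.ConnectedComponent | sizec (cClass G hfin c) = n}.Finite := by
  have hsub : {c : G.ConnectedComponent | sizec (cClass G hfin c) = n} ⊆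
      ⋃ q ∈ {q : GClass | sizec q = n}, {c | cClass G hfin c = q} := by
    intro c hc
    exact Set.mem_biUnion hc rfl
  refine (Set.Finite.biUnion (finite_sizec_eq n) fun q _ => ?_).subset hsub
  exact @Set.toFinite _ _ (mult_fiber_finite hfin hmult q)

lemma comps_sizec_le_finite (hfin : ∀ c : G.ConnectedComponent, c.supp.Finite)
    (hmult : ∀ c : G.ConnectedComponent,
      {c' : G.ConnectedComponent |
        Nonempty (G.induce c.supp ≃g G.induce c'.supp)}.Finite) (N : ℕ) :
    {c : G.ConnectedComponent | sizec (cClass G hfin c) ≤ N}.Finite := by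
  have hsub : {c : G.ConnectedComponent | sizec (cClass G hfin c) ≤ N} ⊆
      ⋃ n ∈ Set.Iic N, {c | sizec (cClass G hfin c) = n} := by
    intro c hc
    exact Set.mem_biUnion hc rfl
  exact ((Set.finite_Iic N).biUnion fun n _ => comps_sizec_eq_finite hfin hmult n).subset hsub

lemma finite_sizec_le (N : ℕ) : {q : GClass | sizec q ≤ N}.Finite := by
  have hsub : {q : GClass | sizec q ≤ N} ⊆ ⋃ n ∈ Set.Iic N, {q | sizec q = n} := by
    intro q hq
    exact Set.mem_biUnion hq rfl
  exact ((Set.finite_Iic N).biUnion fun n _ => finite_sizec_eq n).subset hsub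

/-- Multiplicities are isomorphism invariants. -/
lemma mult_iso (φ : G ≃g H) (hfinG : ∀ c : G.ConnectedComponent, c.supp.Finite)
    (hfinH : ∀ c : H.ConnectedComponent, c.supp.Finite) (q : GClass) :
    mult G hfinG q = mult H hfinH q := by
  have hcl : ∀ c, cClass H hfinH (isoCompEquiv φ c) = cClass G hfinG c := by
    intro c
    haveI := (hfinG c).fintype
    haveI := (hfinH (isoCompEquiv φ c)).fintype
    haveI : Fintype ↥(⇑φ '' c.supp) := ((hfinG c).image ⇑φ).fintype
    rw [cClass_eq H hfinH (isoCompEquiv φ c), cClass_eq G hfinG c]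
    exact (classOf_eq_of_iso (induceCongrSet (supp_isoCompEquiv φ c))).trans
      (classOf_eq_of_iso (isoInduceImage φ c.supp)).symm
  exact Nat.card_congr (Equiv.subtypeEquiv (isoCompEquiv φ) (fun c => by rw [hcl c]))

/-- The class of a component of a strong product is the product of the classes. -/
lemma cClass_prodComp {A : SimpleGraph V} {C : SimpleGraph W}
    (hfinA : ∀ c : A.ConnectedComponent, c.supp.Finite)
    (hfinC : ∀ c : C.ConnectedComponent, c.supp.Finite)
    (hfinP : ∀ c : (strongProd A C).ConnectedComponent, c.supp.Finite)
    (d : (strongProd A C).ConnectedComponent) :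
    cClass (strongProd A C) hfinP d =
      mulc (cClass A hfinA (prodCompEquiv A C d).1) (cClass C hfinC (prodCompEquiv A C d).2) := by
  induction d using ConnectedComponent.ind with | _ p =>
  obtain ⟨a, c⟩ := p
  have he : prodCompEquiv A C ((strongProd A C).connectedComponentMk (a, c)) =
      (A.connectedComponentMk a, C.connectedComponentMk c) := rfl
  rw [he]
  haveI := (hfinA (A.connectedComponentMk a)).fintype
  haveI := (hfinC (C.connectedComponentMk c)).fintype
  haveI := (hfinP ((strongProd A C).connectedComponentMk (a, c))).fintype
  haveI : Fintype ↥((A.connectedComponentMk a).supp ×ˢ (C.connectedComponentMk c).supp) :=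
    ((hfinA _).prod (hfinC _)).fintype
  rw [cClass_eq (strongProd A C) hfinP, cClass_eq A hfinA, cClass_eq C hfinC]
  refine (classOf_eq_of_iso (induceCongrSet (supp_prodComp a c))).trans ?_
  refine (classOf_eq_of_iso (induceProdIso A C _ _)).trans ?_
  rw [classOf_strongProd]

lemma hfin_prod {A : SimpleGraph V} {C : SimpleGraph W}
    (hfinA : ∀ c : A.ConnectedComponent, c.supp.Finite)
    (hfinC : ∀ c : C.ConnectedComponent, c.supp.Finite) :
    ∀ d : (strongProd A C).ConnectedComponent, d.supp.Finite := by
  intro d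
  induction d using ConnectedComponent.ind with | _ p =>
  obtain ⟨a, c⟩ := p
  rw [supp_prodComp]
  exact (hfinA _).prod (hfinC _)

lemma card_eq_sum_fibers {α I : Type} [Finite α] (f : α → I) (Z : Finset I)
    (hf : ∀ a, f a ∈ Z) : Nat.card α = ∑ i ∈ Z, Nat.card {a // f a = i} := by
  classical
  letI := Fintype.ofFinite α
  rw [Nat.card_eq_fintype_card, ← Finset.card_univ,
    Finset.card_eq_sum_card_fiberwise (fun a _ => hf a)]
  refine Finset.sum_congr rfl fun i _ => ?_
  rw [Nat.card_eq_fintype_card, Fintype.card_subtype]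

end Mult

section Decomp
open SimpleGraph Function Finset

open scoped Classical in
lemma mult_prod_decomp {A : SimpleGraph V} {C : SimpleGraph W}
    (hfinA : ∀ c : A.ConnectedComponent, c.supp.Finite)
    (hfinC : ∀ c : C.ConnectedComponent, c.supp.Finite)
    (hmultA : ∀ c : A.ConnectedComponent,
      {c' : A.ConnectedComponent |
        Nonempty (A.induce c.supp ≃g A.induce c'.supp)}.Finite)
    (hmultC : ∀ c : C.ConnectedComponent,
      {c' : C.ConnectedComponent |
        Nonempty (C.induce c.supp ≃g C.induce c'.supp)}.Finite)
    (hfinP : ∀ c : (strongProd A C).ConnectedComponent, c.supp.Finite)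
    (q : GClass) (Z : Finset (GClass × GClass))
    (hZ : ∀ q1 q2, mulc q1 q2 = q → mult A hfinA q1 ≠ 0 → mult C hfinC q2 ≠ 0 → (q1, q2) ∈ Z) :
    mult (strongProd A C) hfinP q =
      ∑ p ∈ Z, if mulc p.1 p.2 = q then mult A hfinA p.1 * mult C hfinC p.2 else 0 := by
  classical
  have e1 : {d : (strongProd A C).ConnectedComponent // cClass (strongProd A C) hfinP d = q} ≃
      {p : A.ConnectedComponent × C.ConnectedComponent //
        mulc (cClass A hfinA p.1) (cClass C hfinC p.2) = q} :=
    (prodCompEquiv A C).subtypeEquiv (fun d => by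
      rw [cClass_prodComp hfinA hfinC hfinP d])
  have hb : ∀ x : {p : A.ConnectedComponent × C.ConnectedComponent //
      mulc (cClass A hfinA p.1) (cClass C hfinC p.2) = q},
      sizec (cClass A hfinA x.1.1) ≤ sizec q ∧ sizec (cClass C hfinC x.1.2) ≤ sizec q := by
    rintro ⟨⟨a, c⟩, hx⟩
    have h2 : sizec q = sizec (cClass A hfinA a) * sizec (cClass C hfinC c) := by
      rw [← hx, sizec_mulc]
    constructor
    · rw [h2]; exact Nat.le_mul_of_pos_right _ (one_le_sizec_cClass hfinC c)
    · rw [h2]; exact Nat.le_mul_of_pos_left _ (one_le_sizec_cClass hfinA a)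
  haveI hfinS : Finite {p : A.ConnectedComponent × C.ConnectedComponent //
      mulc (cClass A hfinA p.1) (cClass C hfinC p.2) = q} := by
    haveI := ((comps_sizec_le_finite hfinA hmultA (sizec q)).prod
      (comps_sizec_le_finite hfinC hmultC (sizec q))).to_subtype
    refine Finite.of_injective (fun x => (⟨x.1, (hb x).1, (hb x).2⟩ :
      ↥({c : A.ConnectedComponent | sizec (cClass A hfinA c) ≤ sizec q} ×ˢ
        {c : C.ConnectedComponent | sizec (cClass C hfinC c) ≤ sizec q}))) ?_
    intro x y hxy
    apply Subtype.ext
    have := congrArg Subtype.val hxy; exact this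
  rw [mult, Nat.card_congr e1]
  set f : {p : A.ConnectedComponent × C.ConnectedComponent //
      mulc (cClass A hfinA p.1) (cClass C hfinC p.2) = q} → GClass × GClass :=
    fun x => (cClass A hfinA x.1.1, cClass C hfinC x.1.2) with hf
  set Z0 := Z.filter (fun p => mulc p.1 p.2 = q ∧ mult A hfinA p.1 ≠ 0 ∧
    mult C hfinC p.2 ≠ 0) with hZ0
  have hmem : ∀ x, f x ∈ Z0 := by
    intro x
    have hA : mult A hfinA (cClass A hfinA x.1.1) ≠ 0 := by
      haveI := mult_fiber_finite hfinA hmultA (cClass A hfinA x.1.1)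
      exact Nat.card_ne_zero.2 ⟨⟨⟨x.1.1, rfl⟩⟩, inferInstance⟩
    have hC : mult C hfinC (cClass C hfinC x.1.2) ≠ 0 := by
      haveI := mult_fiber_finite hfinC hmultC (cClass C hfinC x.1.2)
      exact Nat.card_ne_zero.2 ⟨⟨⟨x.1.2, rfl⟩⟩, inferInstance⟩
    exact Finset.mem_filter.2 ⟨hZ _ _ x.2 hA hC, x.2, hA, hC⟩
  rw [card_eq_sum_fibers f Z0 hmem]
  have hfib : ∀ p ∈ Z0, Nat.card {x // f x = p} =
      (if mulc p.1 p.2 = q then mult A hfinA p.1 * mult C hfinC p.2 else 0) := by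
    rintro ⟨p1, p2⟩ hp
    obtain ⟨-, hpq, -, -⟩ := Finset.mem_filter.1 hp
    rw [if_pos hpq]
    have e2 : {x // f x = (p1, p2)} ≃
        ({a : A.ConnectedComponent // cClass A hfinA a = p1} ×
        {c : C.ConnectedComponent // cClass C hfinC c = p2}) :=
      { toFun := fun x => (⟨x.1.1.1, congrArg Prod.fst x.2⟩, ⟨x.1.1.2, congrArg Prod.snd x.2⟩),
        invFun := fun uv => ⟨⟨(uv.1.1, uv.2.1), by rw [uv.1.2, uv.2.2]; exact hpq⟩,
          Prod.ext uv.1.2 uv.2.2⟩,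
        left_inv := fun x => Subtype.ext (Subtype.ext rfl),
        right_inv := fun uv => Prod.ext (Subtype.ext rfl) (Subtype.ext rfl) }
    rw [Nat.card_congr e2, Nat.card_prod]
    rfl
  rw [Finset.sum_congr rfl hfib]
  refine Finset.sum_subset (Finset.filter_subset _ _) ?_
  intro p hpZ hpZ0
  by_cases hpq : mulc p.1 p.2 = q
  · rw [if_pos hpq]
    rcases Nat.eq_zero_or_pos (mult A hfinA p.1) with h0 | h0
    · rw [h0, Nat.zero_mul]
    rcases Nat.eq_zero_or_pos (mult C hfinC p.2) with h1 | h1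
    · rw [h1, Nat.mul_zero]
    exact absurd (Finset.mem_filter.2 ⟨hpZ, hpq, by omega, by omega⟩) hpZ0
  · rw [if_neg hpq]

end Decomp

section Assemble
open SimpleGraph Function

lemma iso_of_mult_eq {G : SimpleGraph V} {H : SimpleGraph W}
    (hfinG : ∀ c : G.ConnectedComponent, c.supp.Finite)
    (hfinH : ∀ c : H.ConnectedComponent, c.supp.Finite)
    (hmultG : ∀ c : G.ConnectedComponent,
      {c' : G.ConnectedComponent |
        Nonempty (G.induce c.supp ≃g G.induce c'.supp)}.Finite)
    (hmultH : ∀ c : H.ConnectedComponent,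
      {c' : H.ConnectedComponent |
        Nonempty (H.induce c.supp ≃g H.induce c'.supp)}.Finite)
    (h : ∀ q, mult G hfinG q = mult H hfinH q) : Nonempty (G ≃g H) := by
  classical
  have heqv : ∀ q : GClass,
      Nonempty ({c : G.ConnectedComponent // cClass G hfinG c = q} ≃
        {d : H.ConnectedComponent // cClass H hfinH d = q}) := by
    intro q
    haveI := mult_fiber_finite hfinG hmultG q
    haveI := mult_fiber_finite hfinH hmultH q
    letI := Fintype.ofFinite {c : G.ConnectedComponent // cClass G hfinG c = q}
    letI := Fintype.ofFinite {d : H.ConnectedComponent // cClass H hfinH d = q}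
    rw [← Fintype.card_eq]
    have hq := h q
    rwa [mult, mult, Nat.card_eq_fintype_card, Nat.card_eq_fintype_card] at hq
  set E : G.ConnectedComponent ≃ H.ConnectedComponent :=
    ((Equiv.sigmaFiberEquiv (cClass G hfinG)).symm.trans
      ((Equiv.sigmaCongrRight (fun q => (heqv q).some)).trans
        (Equiv.sigmaFiberEquiv (cClass H hfinH)))) with hE
  have hEc : ∀ c, E c = ((heqv (cClass G hfinG c)).some ⟨c, rfl⟩).1 := fun c => rfl
  have hEcl : ∀ c, cClass H hfinH (E c) = cClass G hfinG c := by
    intro c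
    rw [hEc c]
    exact ((heqv (cClass G hfinG c)).some ⟨c, rfl⟩).2
  have hiso : ∀ c : G.ConnectedComponent,
      Nonempty (G.induce c.supp ≃g H.induce (E c).supp) := by
    intro c
    exact (cClass_eq_iff_iso hfinG hfinH c (E c)).1 (hEcl c).symm
  have ich := fun c => (hiso c).some
  set ψ : V → W := fun v =>
    ((ich (G.connectedComponentMk v)) ⟨v, rfl⟩ : ↥(E (G.connectedComponentMk v)).supp).1
    with hψ
  have ψ_spec : ∀ (v : V) (d : G.ConnectedComponent) (hvd : G.connectedComponentMk v = d),
      ψ v = ((ich d) ⟨v, hvd⟩ : ↥(E d).supp).1 := by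
    intro v d hvd
    subst hvd
    rfl
  have mk_ψ : ∀ v, H.connectedComponentMk (ψ v) = E (G.connectedComponentMk v) :=
    fun v => ((ich (G.connectedComponentMk v)) ⟨v, rfl⟩).2
  have hinj : Injective ψ := by
    intro v v' hvv
    have h1 : E (G.connectedComponentMk v) = E (G.connectedComponentMk v') := by
      rw [← mk_ψ v, ← mk_ψ v', hvv]
    have h2 : G.connectedComponentMk v' = G.connectedComponentMk v := (E.injective h1).symm
    rw [ψ_spec v' (G.connectedComponentMk v) h2, ψ_spec v (G.connectedComponentMk v) rfl] at hvv
    have h3 := (ich (G.connectedComponentMk v)).toEquiv.injective (Subtype.ext hvv)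
    exact congrArg Subtype.val h3
  have hsurj : Surjective ψ := by
    intro w
    have hw : w ∈ (E (E.symm (H.connectedComponentMk w))).supp := by
      rw [E.apply_symm_apply]
      rfl
    set u := (ich (E.symm (H.connectedComponentMk w))).symm ⟨w, hw⟩ with hu
    refine ⟨u.1, ?_⟩
    have hmem : G.connectedComponentMk u.1 = E.symm (H.connectedComponentMk w) := u.2
    rw [ψ_spec u.1 _ hmem]
    have h4 : (⟨u.1, hmem⟩ : ↥(E.symm (H.connectedComponentMk w)).supp) = u := Subtype.ext rfl
    rw [h4, hu]
    exact congrArg Subtype.val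
      ((ich (E.symm (H.connectedComponentMk w))).apply_symm_apply ⟨w, hw⟩)
  refine ⟨⟨Equiv.ofBijective ψ ⟨hinj, hsurj⟩, ?_⟩⟩
  intro v v'
  show H.Adj (ψ v) (ψ v') ↔ G.Adj v v'
  constructor
  · intro hadj
    have h1 : H.connectedComponentMk (ψ v) = H.connectedComponentMk (ψ v') :=
      ConnectedComponent.sound hadj.reachable
    rw [mk_ψ, mk_ψ] at h1
    have h2 : G.connectedComponentMk v' = G.connectedComponentMk v := (E.injective h1).symm
    rw [ψ_spec v' (G.connectedComponentMk v) h2, ψ_spec v (G.connectedComponentMk v) rfl] at hadj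
    have h4 : (H.induce (E (G.connectedComponentMk v)).supp).Adj
        ((ich (G.connectedComponentMk v)) ⟨v, rfl⟩)
        ((ich (G.connectedComponentMk v)) ⟨v', h2⟩) := hadj
    exact (ich (G.connectedComponentMk v)).map_rel_iff.1 h4
  · intro hadj
    have h2 : G.connectedComponentMk v' = G.connectedComponentMk v :=
      ConnectedComponent.sound hadj.symm.reachable
    rw [ψ_spec v' (G.connectedComponentMk v) h2, ψ_spec v (G.connectedComponentMk v) rfl]
    have h4 : (G.induce (G.connectedComponentMk v).supp).Adj ⟨v, rfl⟩ ⟨v', h2⟩ := hadj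
    exact (ich (G.connectedComponentMk v)).map_rel_iff.2 h4

end Assemble

end S17

/-- cancellation for the strong product. If `A`, `B`, `C` are countable
simple graphs in which every connected component is finite and every isomorphism class
of components occurs only finitely often, `C` is nonempty, and `A ⊠ C ≅ B ⊠ C`, then
`A ≅ B`. -/
theorem stmt17 {α β γ : Type} [Countable α] [Countable β] [Countable γ]
    (A : SimpleGraph α) (B : SimpleGraph β) (C : SimpleGraph γ)
    (hAfin : ∀ c : A.ConnectedComponent, c.supp.Finite)
    (hBfin : ∀ c : B.ConnectedComponent, c.supp.Finite)
    (hCfin : ∀ c : C.ConnectedComponent, c.supp.Finite)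
    (hAmult : ∀ c : A.ConnectedComponent,
      {c' : A.ConnectedComponent |
        Nonempty (A.induce c.supp ≃g A.induce c'.supp)}.Finite)
    (hBmult : ∀ c : B.ConnectedComponent,
      {c' : B.ConnectedComponent |
        Nonempty (B.induce c.supp ≃g B.induce c'.supp)}.Finite)
    (hCmult : ∀ c : C.ConnectedComponent,
      {c' : C.ConnectedComponent |
        Nonempty (C.induce c.supp ≃g C.induce c'.supp)}.Finite)
    (hCne : Nonempty γ)
    (h : Nonempty (strongProd A C ≃g strongProd B C)) :
    Nonempty (A ≃g B) := by
    classical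
  obtain ⟨φ⟩ := h
  have hfinP : ∀ d : (strongProd A C).ConnectedComponent, d.supp.Finite :=
    S17.hfin_prod hAfin hCfin
  have hfinQ : ∀ d : (strongProd B C).ConnectedComponent, d.supp.Finite :=
    S17.hfin_prod hBfin hCfin
  set mA : S17.GClass → ℕ := S17.mult A hAfin with hmA
  set mB : S17.GClass → ℕ := S17.mult B hBfin with hmB
  set mC : S17.GClass → ℕ := S17.mult C hCfin with hmC
  suffices hAB : ∀ q, mA q = mB q by
    exact S17.iso_of_mult_eq hAfin hBfin hAmult hBmult hAB
  by_contra hne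
  push_neg at hne
  obtain ⟨qd, hqd⟩ := hne
  -- minimal size where the multiplicities differ
  have hDSne : {m : ℕ | ∃ q, S17.sizec q = m ∧ mA q ≠ mB q}.Nonempty :=
    ⟨S17.sizec qd, qd, rfl, hqd⟩
  set n := sInf {m : ℕ | ∃ q, S17.sizec q = m ∧ mA q ≠ mB q} with hn
  obtain ⟨q0, hq0s, hq0⟩ := Nat.sInf_mem hDSne
  rw [← hn] at hq0s
  have hminA : ∀ q, S17.sizec q < n → mA q = mB q := by
    intro q hq
    by_contra hne2
    have hmem : S17.sizec q ∈ {m : ℕ | ∃ q', S17.sizec q' = m ∧ mA q' ≠ mB q'} :=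
      ⟨q, rfl, hne2⟩
    have hle := Nat.sInf_le hmem
    rw [← hn] at hle
    omega
  have hn1 : 1 ≤ n := by
    rw [← hq0s]
    rcases Nat.eq_zero_or_pos (mA q0) with h0 | h0
    · have hB0 : mB q0 ≠ 0 := fun hc => hq0 (h0.trans hc.symm)
      exact S17.one_le_sizec_of_mult_ne_zero hBfin hBmult hB0
    · exact S17.one_le_sizec_of_mult_ne_zero hAfin hAmult (Nat.pos_iff_ne_zero.mp h0)
  -- minimal size of a component class of C
  have hCSne : {m : ℕ | ∃ j, S17.sizec j = m ∧ mC j ≠ 0}.Nonempty := by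
    obtain ⟨g0⟩ := hCne
    refine ⟨S17.sizec (S17.cClass C hCfin (C.connectedComponentMk g0)), _, rfl, ?_⟩
    exact (S17.mult_ne_zero_iff hCfin hCmult _).2 ⟨C.connectedComponentMk g0, rfl⟩
  set k := sInf {m : ℕ | ∃ j, S17.sizec j = m ∧ mC j ≠ 0} with hk
  obtain ⟨j0, hj0s, hj0⟩ := Nat.sInf_mem hCSne
  rw [← hk] at hj0s
  have hkmin : ∀ j, mC j ≠ 0 → k ≤ S17.sizec j := by
    intro j hj
    have hmem : S17.sizec j ∈ {m : ℕ | ∃ j', S17.sizec j' = m ∧ mC j' ≠ 0} := ⟨j, rfl, hj⟩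
    have hle := Nat.sInf_le hmem
    rw [← hk] at hle
    exact hle
  have hk1 : 1 ≤ k := by
    rw [← hj0s]
    exact S17.one_le_sizec_of_mult_ne_zero hCfin hCmult hj0
  -- the sliced multiplicity functions
  set r : S17.GClass → ℕ := fun i => if S17.sizec i = n then mA i else 0 with hr
  set s : S17.GClass → ℕ := fun i => if S17.sizec i = n then mB i else 0 with hs
  set t : S17.GClass → ℕ := fun j => if S17.sizec j = k then mC j else 0 with ht
  set U : Finset S17.GClass := (S17.finite_sizec_eq n).toFinset with hU
  set T : Finset S17.GClass := (S17.finite_sizec_eq k).toFinset with hT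
  have hrU : ∀ i, r i ≠ 0 → i ∈ U := by
    intro i hi
    rw [hU, Set.Finite.mem_toFinset]
    by_contra hcon
    exact hi (if_neg hcon)
  have hsU : ∀ i, s i ≠ 0 → i ∈ U := by
    intro i hi
    rw [hU, Set.Finite.mem_toFinset]
    by_contra hcon
    exact hi (if_neg hcon)
  have htT : ∀ j, t j ≠ 0 → j ∈ T := by
    intro j hj
    rw [hT, Set.Finite.mem_toFinset]
    by_contra hcon
    exact hj (if_neg hcon)
  have hUs : ∀ i ∈ U, S17.sizec i = n := by
    intro i hi
    rwa [hU, Set.Finite.mem_toFinset] at hi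
  have hTs : ∀ j ∈ T, S17.sizec j = k := by
    intro j hj
    rwa [hT, Set.Finite.mem_toFinset] at hj
  have htne : ∃ j, t j ≠ 0 := ⟨j0, by rw [ht]; simpa [hj0s] using hj0⟩
  have htsz : ∀ j, t j ≠ 0 → S17.sizec j = k := by
    intro j hj
    by_contra hcon
    exact hj (if_neg hcon)
  -- the main counting identity
  have Hq : ∀ q : S17.GClass,
      (∑ p ∈ U ×ˢ T, if S17.mulc p.1 p.2 = q then r p.1 * t p.2 else 0) =
      (∑ p ∈ U ×ˢ T, if S17.mulc p.1 p.2 = q then s p.1 * t p.2 else 0) := by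
    intro q
    by_cases hqs : S17.sizec q = n * k
    case neg =>
      have hzero : ∀ u : S17.GClass → ℕ,
          (∑ p ∈ U ×ˢ T, if S17.mulc p.1 p.2 = q then u p.1 * t p.2 else 0) = 0 := by
        intro u
        refine Finset.sum_eq_zero fun p hp => ?_
        obtain ⟨hp1, hp2⟩ := Finset.mem_product.1 hp
        rw [if_neg]
        intro hcon
        apply hqs
        rw [← hcon, S17.sizec_mulc, hUs p.1 hp1, hTs p.2 hp2]
      rw [hzero r, hzero s]
    case pos =>
      set Wf : Finset S17.GClass := (S17.finite_sizec_le (S17.sizec q)).toFinset with hWf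
      have hcov : ∀ q1 q2, S17.mulc q1 q2 = q →
          1 ≤ S17.sizec q1 → 1 ≤ S17.sizec q2 → (q1, q2) ∈ Wf ×ˢ Wf := by
        intro q1 q2 hm h1 h2
        have hsz : S17.sizec q1 * S17.sizec q2 = S17.sizec q := by
          rw [← S17.sizec_mulc, hm]
        refine Finset.mem_product.2 ⟨?_, ?_⟩
        · rw [hWf, Set.Finite.mem_toFinset]
          show S17.sizec q1 ≤ S17.sizec q
          calc S17.sizec q1 ≤ S17.sizec q1 * S17.sizec q2 :=
                Nat.le_mul_of_pos_right _ (by omega)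
            _ = S17.sizec q := hsz
        · rw [hWf, Set.Finite.mem_toFinset]
          show S17.sizec q2 ≤ S17.sizec q
          calc S17.sizec q2 ≤ S17.sizec q1 * S17.sizec q2 :=
                Nat.le_mul_of_pos_left _ (by omega)
            _ = S17.sizec q := hsz
      have hcovA : ∀ q1 q2, S17.mulc q1 q2 = q → mA q1 ≠ 0 → mC q2 ≠ 0 →
          (q1, q2) ∈ Wf ×ˢ Wf := by
        intro q1 q2 hm h1 h2
        exact hcov q1 q2 hm (S17.one_le_sizec_of_mult_ne_zero hAfin hAmult h1)
          (S17.one_le_sizec_of_mult_ne_zero hCfin hCmult h2)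
      have hcovB : ∀ q1 q2, S17.mulc q1 q2 = q → mB q1 ≠ 0 → mC q2 ≠ 0 →
          (q1, q2) ∈ Wf ×ˢ Wf := by
        intro q1 q2 hm h1 h2
        exact hcov q1 q2 hm (S17.one_le_sizec_of_mult_ne_zero hBfin hBmult h1)
          (S17.one_le_sizec_of_mult_ne_zero hCfin hCmult h2)
      have hA := S17.mult_prod_decomp hAfin hCfin hAmult hCmult hfinP q (Wf ×ˢ Wf) hcovA
      have hB := S17.mult_prod_decomp hBfin hCfin hBmult hCmult hfinQ q (Wf ×ˢ Wf) hcovB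
      have hPQ : S17.mult (strongProd A C) hfinP q = S17.mult (strongProd B C) hfinQ q :=
        S17.mult_iso φ hfinP hfinQ q
      have hWeq : (∑ p ∈ Wf ×ˢ Wf, if S17.mulc p.1 p.2 = q then mA p.1 * mC p.2 else 0) =
          (∑ p ∈ Wf ×ˢ Wf, if S17.mulc p.1 p.2 = q then mB p.1 * mC p.2 else 0) := by
        rw [← hA, ← hB, ← hPQ]
      set Efin : Finset (S17.GClass × S17.GClass) := Wf ×ˢ Wf ∪ U ×ˢ T with hEfin
      have hFA : (∑ p ∈ Wf ×ˢ Wf, if S17.mulc p.1 p.2 = q then mA p.1 * mC p.2 else 0) =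
          ∑ p ∈ Efin, if S17.mulc p.1 p.2 = q then mA p.1 * mC p.2 else 0 := by
        refine Finset.sum_subset Finset.subset_union_left ?_
        intro p hpE hpW
        by_cases h1 : S17.mulc p.1 p.2 = q
        · rw [if_pos h1]
          rcases Nat.eq_zero_or_pos (mA p.1) with h2 | h2
          · rw [h2, Nat.zero_mul]
          rcases Nat.eq_zero_or_pos (mC p.2) with h3 | h3
          · rw [h3, Nat.mul_zero]
          exact absurd (hcovA p.1 p.2 h1 (by omega) (by omega)) (by simpa using hpW)
        · rw [if_neg h1]
      have hFB : (∑ p ∈ Wf ×ˢ Wf, if S17.mulc p.1 p.2 = q then mB p.1 * mC p.2 else 0) =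
          ∑ p ∈ Efin, if S17.mulc p.1 p.2 = q then mB p.1 * mC p.2 else 0 := by
        refine Finset.sum_subset Finset.subset_union_left ?_
        intro p hpE hpW
        by_cases h1 : S17.mulc p.1 p.2 = q
        · rw [if_pos h1]
          rcases Nat.eq_zero_or_pos (mB p.1) with h2 | h2
          · rw [h2, Nat.zero_mul]
          rcases Nat.eq_zero_or_pos (mC p.2) with h3 | h3
          · rw [h3, Nat.mul_zero]
          exact absurd (hcovB p.1 p.2 h1 (by omega) (by omega)) (by simpa using hpW)
        · rw [if_neg h1]
      have hdecompA : ∀ p : S17.GClass × S17.GClass,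
          (if S17.mulc p.1 p.2 = q then mA p.1 * mC p.2 else 0) =
          (if S17.mulc p.1 p.2 = q then r p.1 * t p.2 else 0) +
          (if S17.mulc p.1 p.2 = q ∧ S17.sizec p.1 ≠ n then mA p.1 * mC p.2 else 0) := by
        intro p
        by_cases h1 : S17.mulc p.1 p.2 = q
        · rw [if_pos h1, if_pos h1]
          by_cases h2 : S17.sizec p.1 = n
          · rw [if_neg (by tauto), Nat.add_zero, hr]
            simp only [if_pos h2]
            by_cases h3 : mC p.2 = 0
            · rw [ht]
              simp [h3]
            · have h5 : S17.sizec p.1 * S17.sizec p.2 = n * k := by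
                rw [← S17.sizec_mulc, h1, hqs]
              rw [h2] at h5
              have h4 : S17.sizec p.2 = k := Nat.eq_of_mul_eq_mul_left (by omega) h5
              rw [ht]
              simp only [if_pos h4]
          · rw [if_pos (show S17.mulc p.1 p.2 = q ∧ S17.sizec p.1 ≠ n from ⟨h1, h2⟩), hr]
            simp only [if_neg h2, Nat.zero_mul, Nat.zero_add]
        · rw [if_neg h1, if_neg h1, if_neg (by tauto), Nat.add_zero]
      have hdecompB : ∀ p : S17.GClass × S17.GClass,
          (if S17.mulc p.1 p.2 = q then mB p.1 * mC p.2 else 0) =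
          (if S17.mulc p.1 p.2 = q then s p.1 * t p.2 else 0) +
          (if S17.mulc p.1 p.2 = q ∧ S17.sizec p.1 ≠ n then mB p.1 * mC p.2 else 0) := by
        intro p
        by_cases h1 : S17.mulc p.1 p.2 = q
        · rw [if_pos h1, if_pos h1]
          by_cases h2 : S17.sizec p.1 = n
          · rw [if_neg (by tauto), Nat.add_zero, hs]
            simp only [if_pos h2]
            by_cases h3 : mC p.2 = 0
            · rw [ht]
              simp [h3]
            · have h5 : S17.sizec p.1 * S17.sizec p.2 = n * k := by
                rw [← S17.sizec_mulc, h1, hqs]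
              rw [h2] at h5
              have h4 : S17.sizec p.2 = k := Nat.eq_of_mul_eq_mul_left (by omega) h5
              rw [ht]
              simp only [if_pos h4]
          · rw [if_pos (show S17.mulc p.1 p.2 = q ∧ S17.sizec p.1 ≠ n from ⟨h1, h2⟩), hs]
            simp only [if_neg h2, Nat.zero_mul, Nat.zero_add]
        · rw [if_neg h1, if_neg h1, if_neg (by tauto), Nat.add_zero]
      have hDeq : ∀ p ∈ Efin,
          (if S17.mulc p.1 p.2 = q ∧ S17.sizec p.1 ≠ n then mA p.1 * mC p.2 else 0) =
          (if S17.mulc p.1 p.2 = q ∧ S17.sizec p.1 ≠ n then mB p.1 * mC p.2 else 0) := by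
        intro p hp
        by_cases h1 : S17.mulc p.1 p.2 = q ∧ S17.sizec p.1 ≠ n
        · rw [if_pos h1, if_pos h1]
          by_cases h3 : mC p.2 = 0
          · rw [h3, Nat.mul_zero, Nat.mul_zero]
          · have h5 : S17.sizec p.1 * S17.sizec p.2 = n * k := by
              rw [← S17.sizec_mulc, h1.1, hqs]
            have h6 : k ≤ S17.sizec p.2 := hkmin _ h3
            rcases Nat.lt_or_ge (S17.sizec p.1) n with h7 | h7
            · rw [hminA p.1 h7]
            · exfalso
              have h8 : n + 1 ≤ S17.sizec p.1 := by
                rcases Nat.lt_or_ge n (S17.sizec p.1) with h9 | h9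
                · omega
                · exact absurd (le_antisymm h9 h7) h1.2
              have h10 : (n + 1) * k ≤ S17.sizec p.1 * S17.sizec p.2 :=
                Nat.mul_le_mul h8 h6
              rw [h5, Nat.succ_mul] at h10
              omega
        · rw [if_neg h1, if_neg h1]
      have hsplitA : (∑ p ∈ Efin, if S17.mulc p.1 p.2 = q then mA p.1 * mC p.2 else 0) =
          (∑ p ∈ Efin, if S17.mulc p.1 p.2 = q then r p.1 * t p.2 else 0) +
          ∑ p ∈ Efin, if S17.mulc p.1 p.2 = q ∧ S17.sizec p.1 ≠ n then mA p.1 * mC p.2 else 0 := by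
        rw [← Finset.sum_add_distrib]
        exact Finset.sum_congr rfl fun p _ => hdecompA p
      have hsplitB : (∑ p ∈ Efin, if S17.mulc p.1 p.2 = q then mB p.1 * mC p.2 else 0) =
          (∑ p ∈ Efin, if S17.mulc p.1 p.2 = q then s p.1 * t p.2 else 0) +
          ∑ p ∈ Efin, if S17.mulc p.1 p.2 = q ∧ S17.sizec p.1 ≠ n then mB p.1 * mC p.2 else 0 := by
        rw [← Finset.sum_add_distrib]
        exact Finset.sum_congr rfl fun p _ => hdecompB p
      have hEeq : (∑ p ∈ Efin, if S17.mulc p.1 p.2 = q then r p.1 * t p.2 else 0) =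
          ∑ p ∈ Efin, if S17.mulc p.1 p.2 = q then s p.1 * t p.2 else 0 := by
        have h11 := hWeq
        rw [hFA, hFB, hsplitA, hsplitB, Finset.sum_congr rfl hDeq] at h11
        exact Nat.add_right_cancel h11
      have hshrink : ∀ u : S17.GClass → ℕ, (∀ i, u i ≠ 0 → i ∈ U) →
          (∑ p ∈ U ×ˢ T, if S17.mulc p.1 p.2 = q then u p.1 * t p.2 else 0) =
          ∑ p ∈ Efin, if S17.mulc p.1 p.2 = q then u p.1 * t p.2 else 0 := by
        intro u huU
        refine Finset.sum_subset Finset.subset_union_right ?_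
        intro p hpE hpUT
        by_cases h1 : S17.mulc p.1 p.2 = q
        · rw [if_pos h1]
          rcases Nat.eq_zero_or_pos (u p.1) with h2 | h2
          · rw [h2, Nat.zero_mul]
          rcases Nat.eq_zero_or_pos (t p.2) with h3 | h3
          · rw [h3, Nat.mul_zero]
          exact absurd (Finset.mem_product.2 ⟨huU p.1 (by omega), htT p.2 (by omega)⟩)
            hpUT
        · rw [if_neg h1]
      rw [hshrink r hrU, hshrink s hsU]
      exact hEeq
  have hrs := S17.core_cancel n k hk1 r s t htsz htne U T hrU hsU htT hUs Hq
  have hfin2 := congrFun hrs q0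
  rw [hr, hs] at hfin2
  simp only [if_pos hq0s] at hfin2
  exact hq0 hfin2
end

section
/- Let G be a finite connected simple graph with at least two vertices. For a sequence a = (a_n)_{n ≥ 2} of positive integers, let H_a be the simple graph that is the disjoint union of countably infinitely many copies of G together with, for each n ≥ 2, exactly a_n copies of the n-fold Cartesian (box) product G □ G □ ⋯ □ G (n factors). Then for any two sequences a = (a_n)_{n ≥ 2} and b = (b_n)_{n ≥ 2} of positive integers, the box products H_a □ H_a and H_b □ H_b are isomorphic; yet if a ≠ b then H_a is not isomorphic to H_b. In particular, the unique square root property fails for the Cartesian product of countable graphs once connected components are allowed to occur with infinite multiplicity. -/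
/-- Vertex type of the `(n+1)`-fold box product of a graph on `α` with itself. -/
def BoxPowType (α : Type) : ℕ → Type
  | 0 => α
  | n + 1 => α × BoxPowType α n

/-- The `(n+1)`-fold Cartesian (box) product `G □ G □ ⋯ □ G`. -/
def boxPow {α : Type} (G : SimpleGraph α) : (n : ℕ) → SimpleGraph (BoxPowType α n)
  | 0 => G
  | n + 1 => G.boxProd (boxPow G n)

/-- The disjoint union of a family of simple graphs, on the sigma type of the vertex
types: edges are exactly the edges within each summand. -/
def sigmaGraph {ι : Type} {V : ι → Type} (G : ∀ i, SimpleGraph (V i)) :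
    SimpleGraph (Σ i, V i) where
  Adj p q := ∃ h : p.1 = q.1, (G q.1).Adj (h ▸ p.2) q.2
  symm := by
    constructor
    rintro ⟨i, v⟩ ⟨j, w⟩ ⟨h, hadj⟩
    obtain rfl : i = j := h
    exact ⟨rfl, hadj.symm⟩
  loopless := by
    constructor
    rintro ⟨i, v⟩ ⟨h, hadj⟩
    exact (G i).loopless.irrefl v hadj

/-- Index type for the graph `H_a`: one index in `Sum.inl` for each of the countably
many copies of `G`, and, for each `n : ℕ`, indices `Sum.inr ⟨n, k⟩`, `k < a n`, for
the `a n` copies of the `(n+2)`-fold box power of `G` (so `a n` plays the role of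
`a_{n+2}` of the sequence `(a_m)_{m ≥ 2}`). -/
def HIdx (a : ℕ → ℕ) : Type := ℕ ⊕ (Σ n : ℕ, Fin (a n))

/-- Vertex types of the components of `H_a`. -/
def HType (α : Type) (a : ℕ → ℕ) : HIdx a → Type
  | Sum.inl _ => α
  | Sum.inr ⟨n, _⟩ => BoxPowType α (n + 1)

/-- The family of components of `H_a`: copies of `G` and, for each `n`, `a n` copies of
the `(n+2)`-fold box power of `G`. -/
def HFam {α : Type} (G : SimpleGraph α) (a : ℕ → ℕ) :
    ∀ i : HIdx a, SimpleGraph (HType α a i)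
  | Sum.inl _ => G
  | Sum.inr ⟨n, _⟩ => boxPow G (n + 1)

/-- The graph `H_a`: the disjoint union of countably infinitely many copies of `G`
together with, for each `n ≥ 2`, exactly `a_n` copies of the `n`-fold box power of `G`
(here `a : ℕ → ℕ` with `a k` encoding `a_{k+2}`). -/
def HGraph {α : Type} (G : SimpleGraph α) (a : ℕ → ℕ) :
    SimpleGraph (Σ i, HType α a i) :=
  sigmaGraph (HFam G a)

namespace Stmt19Aux

open SimpleGraph

variable {α β : Type}

instance instFinBox [Fintype α] : ∀ n, Fintype (BoxPowType α n)
  | 0 => inferInstanceAs (Fintype α)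
  | n + 1 => @instFintypeProd α (BoxPowType α n) _ (instFinBox n)

instance instNEBox [Nonempty α] : ∀ n, Nonempty (BoxPowType α n)
  | 0 => inferInstanceAs (Nonempty α)
  | n + 1 => ⟨⟨Classical.arbitrary α, (instNEBox n).some⟩⟩

lemma card_boxPowType [Fintype α] : ∀ n, Fintype.card (BoxPowType α n) = Fintype.card α ^ (n + 1)
  | 0 => (pow_one _).symm
  | n + 1 => by
    show Fintype.card (α × BoxPowType α n) = _
    rw [Fintype.card_prod, card_boxPowType n, pow_succ]
    ring

lemma boxPow_connected {G : SimpleGraph α} (hG : G.Connected) :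
    ∀ n, (boxPow G n).Connected
  | 0 => hG
  | n + 1 => hG.boxProd (boxPow_connected hG n)

/-- degree of an index of `H_a` -/
def deg {a : ℕ → ℕ} : HIdx a → ℕ
  | Sum.inl _ => 0
  | Sum.inr ⟨n, _⟩ => n + 1

/-- the components of `H_a` are box powers -/
def HFamIso {G : SimpleGraph α} {a : ℕ → ℕ} : ∀ i : HIdx a, HFam G a i ≃g boxPow G (deg i)
  | Sum.inl _ => RelIso.refl _
  | Sum.inr ⟨_, _⟩ => RelIso.refl _

instance {a : ℕ → ℕ} : Countable (HIdx a) := by unfold HIdx; infer_instance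

instance [Fintype α] {a : ℕ → ℕ} (i : HIdx a) : Fintype (HType α a i) :=
  match i with
  | Sum.inl _ => inferInstanceAs (Fintype α)
  | Sum.inr ⟨n, _⟩ => inferInstanceAs (Fintype (BoxPowType α (n + 1)))

lemma card_HType [Fintype α] {a : ℕ → ℕ} (i : HIdx a) :
    Fintype.card (HType α a i) = Fintype.card α ^ (deg i + 1) := by
  match i with
  | Sum.inl _ => exact (pow_one _).symm
  | Sum.inr ⟨n, _⟩ => exact card_boxPowType (n + 1)


section
variable {ι κ : Type} {V : ι → Type} {W : κ → Type}

lemma sigmaGraph_adj {G : ∀ i, SimpleGraph (V i)} {i : ι} {v w : V i} (h : (G i).Adj v w) :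
    (sigmaGraph G).Adj ⟨i, v⟩ ⟨i, w⟩ := ⟨rfl, h⟩

lemma sigmaGraph_reachable_fst {G : ∀ i, SimpleGraph (V i)} {p q : Σ i, V i}
    (h : (sigmaGraph G).Reachable p q) : p.1 = q.1 := by
  obtain ⟨w⟩ := h
  induction w with
  | nil => rfl
  | cons h _ ih => exact h.1.trans ih

/-- inclusion of a summand -/
def sigmaIncl (G : ∀ i, SimpleGraph (V i)) (i : ι) : G i →g sigmaGraph G :=
  ⟨fun v => ⟨i, v⟩, fun h => ⟨rfl, h⟩⟩

lemma sigmaGraph_reachable {G : ∀ i, SimpleGraph (V i)} {i : ι} {v w : V i}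
    (h : (G i).Reachable v w) : (sigmaGraph G).Reachable ⟨i, v⟩ ⟨i, w⟩ :=
  h.map (sigmaIncl G i)

/-- reindexing iso for sigma graphs -/
def sigmaGraphIso (G : ∀ i, SimpleGraph (V i)) (H : ∀ j, SimpleGraph (W j))
    (e : ι ≃ κ) (f : ∀ i, G i ≃g H (e i)) : sigmaGraph G ≃g sigmaGraph H where
  toEquiv := Equiv.sigmaCongr e fun i => (f i).toEquiv
  map_rel_iff' := by
    rintro ⟨i, v⟩ ⟨j, w⟩
    show (sigmaGraph H).Adj ⟨e i, f i v⟩ ⟨e j, f j w⟩ ↔ _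
    constructor
    · rintro ⟨h, hadj⟩
      obtain rfl : i = j := e.injective h
      exact ⟨rfl, (f i).map_rel_iff.mp hadj⟩
    · rintro ⟨h, hadj⟩
      obtain rfl : i = j := h
      exact ⟨rfl, (f i).map_rel_iff.mpr hadj⟩

/-- box product of sigma graphs as sigma graph -/
def boxProdSigma (G : ∀ i, SimpleGraph (V i)) (H : ∀ j, SimpleGraph (W j)) :
    (sigmaGraph G).boxProd (sigmaGraph H) ≃g
      sigmaGraph (fun p : ι × κ => (G p.1).boxProd (H p.2)) where
  toEquiv := {
    toFun := fun x => ⟨(x.1.1, x.2.1), (x.1.2, x.2.2)⟩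
    invFun := fun x => (⟨x.1.1, x.2.1⟩, ⟨x.1.2, x.2.2⟩)
    left_inv := fun x => rfl
    right_inv := fun x => rfl }
  map_rel_iff' := by
    rintro ⟨⟨i, v⟩, ⟨j, w⟩⟩ ⟨⟨i', v'⟩, ⟨j', w'⟩⟩
    show (sigmaGraph fun p : ι × κ => (G p.1).boxProd (H p.2)).Adj ⟨(i, j), (v, w)⟩
        ⟨(i', j'), (v', w')⟩ ↔ ((sigmaGraph G).boxProd (sigmaGraph H)).Adj (⟨i, v⟩, ⟨j, w⟩)
        (⟨i', v'⟩, ⟨j', w'⟩)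
    constructor
    · rintro ⟨h, hadj⟩
      obtain rfl : i = i' := congrArg Prod.fst h
      obtain rfl : j = j' := congrArg Prod.snd h
      rcases hadj with ⟨hG, hv⟩ | ⟨hH, hv⟩
      · obtain rfl : w = w' := hv
        exact Or.inl ⟨⟨rfl, hG⟩, rfl⟩
      · obtain rfl : v = v' := hv
        exact Or.inr ⟨⟨rfl, hH⟩, rfl⟩
    · rintro (⟨⟨h, hG⟩, h2⟩ | ⟨⟨h, hH⟩, h2⟩)
      · obtain rfl : i = i' := h
        obtain ⟨rfl, hw⟩ := Sigma.mk.inj_iff.mp h2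
        obtain rfl := eq_of_heq hw
        exact ⟨rfl, Or.inl ⟨hG, rfl⟩⟩
      · obtain rfl : j = j' := h
        obtain ⟨rfl, hv⟩ := Sigma.mk.inj_iff.mp h2
        obtain rfl := eq_of_heq hv
        exact ⟨rfl, Or.inr ⟨hH, rfl⟩⟩

end

section
open SimpleGraph
variable {α₁ α₂ β₁ β₂ : Type}

/-- congruence iso for box products -/
def boxProdCongr {G₁ : SimpleGraph α₁} {G₂ : SimpleGraph α₂} {H₁ : SimpleGraph β₁}
    {H₂ : SimpleGraph β₂} (e₁ : G₁ ≃g G₂) (e₂ : H₁ ≃g H₂) : G₁.boxProd H₁ ≃g G₂.boxProd H₂ where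
  toEquiv := Equiv.prodCongr e₁.toEquiv e₂.toEquiv
  map_rel_iff' := by
    rintro ⟨u, v⟩ ⟨u', v'⟩
    simp only [Equiv.prodCongr_apply, boxProd_adj, Prod.map_fst, Prod.map_snd]
    exact or_congr (and_congr e₁.map_rel_iff e₂.toEquiv.injective.eq_iff)
      (and_congr e₂.map_rel_iff e₁.toEquiv.injective.eq_iff)

/-- cast iso for box powers -/
def boxPowCast {α : Type} (G : SimpleGraph α) {m n : ℕ} (h : m = n) :
    boxPow G m ≃g boxPow G n := h ▸ RelIso.refl _

/-- box product of box powers -/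
def boxPowAdd {α : Type} (G : SimpleGraph α) : ∀ i j : ℕ,
    (boxPow G i).boxProd (boxPow G j) ≃g boxPow G (i + j + 1)
  | 0, j => boxPowCast G (show j + 1 = 0 + j + 1 by omega)
  | i + 1, j =>
    ((G.boxProdAssoc (boxPow G i) (boxPow G j)).trans
      (boxProdCongr (SimpleGraph.Iso.refl) (boxPowAdd G i j))).trans
      (boxPowCast G (show i + j + 1 + 1 = i + 1 + j + 1 by omega))

end


section Part1
open SimpleGraph
variable {α : Type} {a b : ℕ → ℕ}

/-- total degree of a pair of indices -/
def D {a : ℕ → ℕ} (p : HIdx a × HIdx a) : ℕ := deg p.1 + deg p.2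

/-- a witness of each degree -/
def wit (a : ℕ → ℕ) (ha : ∀ n, 0 < a n) : ∀ m : ℕ, {i : HIdx a // deg i = m}
  | 0 => ⟨Sum.inl 0, rfl⟩
  | n + 1 => ⟨Sum.inr ⟨n, ⟨0, ha n⟩⟩, rfl⟩

lemma fiber_infinite (ha : ∀ n, 0 < a n) (m : ℕ) :
    Infinite {p : HIdx a × HIdx a // D p = m} := by
  refine Infinite.of_injective
    (fun k : ℕ => ⟨(Sum.inl k, (wit a ha m).1), by simp [D, (wit a ha m).2]; rfl⟩) ?_
  intro k l h
  exact Sum.inl.inj (congrArg (fun q : {p : HIdx a × HIdx a // D p = m} => q.1.1) h)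

lemma fiber_equiv (ha : ∀ n, 0 < a n) (hb : ∀ n, 0 < b n) (m : ℕ) :
    Nonempty ({p : HIdx a × HIdx a // D p = m} ≃ {p : HIdx b × HIdx b // D p = m}) := by
  haveI := fiber_infinite ha m
  haveI := fiber_infinite hb m
  refine Cardinal.eq.mp ?_
  rw [Cardinal.mk_eq_aleph0, Cardinal.mk_eq_aleph0]

/-- the degree-preserving bijection between the index sets of the squares -/
lemma exists_deg_equiv (ha : ∀ n, 0 < a n) (hb : ∀ n, 0 < b n) :
    ∃ e : (HIdx a × HIdx a) ≃ (HIdx b × HIdx b), ∀ p, D (e p) = D p := by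
  have F : ∀ m, {p : HIdx a × HIdx a // D p = m} ≃ {p : HIdx b × HIdx b // D p = m} :=
    fun m => (fiber_equiv ha hb m).some
  refine ⟨(Equiv.sigmaFiberEquiv (D (a := a))).symm.trans
    ((Equiv.sigmaCongrRight F).trans (Equiv.sigmaFiberEquiv (D (a := b)))), fun p => ?_⟩
  exact (F (D p) ⟨p, rfl⟩).2


/-- each product component as a box power -/
def compIso {G : SimpleGraph α} {a : ℕ → ℕ} (p : HIdx a × HIdx a) :
    ((HFam G a p.1).boxProd (HFam G a p.2)) ≃g boxPow G (D p + 1) :=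
  (boxProdCongr (HFamIso p.1) (HFamIso p.2)).trans (boxPowAdd G _ _)

lemma part1 (G : SimpleGraph α) (ha : ∀ n, 0 < a n) (hb : ∀ n, 0 < b n) :
    Nonempty ((HGraph G a).boxProd (HGraph G a) ≃g (HGraph G b).boxProd (HGraph G b)) := by
  obtain ⟨e, he⟩ := exists_deg_equiv ha hb
  exact ⟨((boxProdSigma (HFam G a) (HFam G a)).trans
    (sigmaGraphIso _ _ e fun p => (compIso p).trans
      ((boxPowCast G (by rw [he p])).trans (compIso (e p)).symm))).trans
    (boxProdSigma (HFam G b) (HFam G b)).symm⟩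

end Part1

section Part2
open SimpleGraph
variable {α : Type} {a b : ℕ → ℕ}

instance [Nonempty α] {a : ℕ → ℕ} : ∀ i : HIdx a, Nonempty (HType α a i)
  | Sum.inl _ => inferInstanceAs (Nonempty α)
  | Sum.inr ⟨n, _⟩ => inferInstanceAs (Nonempty (BoxPowType α (n + 1)))

lemma HFam_connected {G : SimpleGraph α} (hconn : G.Connected) :
    ∀ i : HIdx a, (HFam G a i).Connected
  | Sum.inl _ => hconn
  | Sum.inr ⟨n, _⟩ => boxPow_connected hconn (n + 1)

/-- an iso of disjoint unions of connected graphs maps summands into summands -/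
lemma iso_fst {ι κ : Type} {V : ι → Type} {W : κ → Type} {G : ∀ i, SimpleGraph (V i)}
    {H : ∀ j, SimpleGraph (W j)} (hG : ∀ i, (G i).Connected)
    (φ : sigmaGraph G ≃g sigmaGraph H) (p q : Σ i, V i) (h : p.1 = q.1) :
    (φ p).1 = (φ q).1 := by
  obtain ⟨i, v⟩ := p
  obtain ⟨j, w⟩ := q
  obtain rfl : i = j := h
  have r : (sigmaGraph G).Reachable ⟨i, v⟩ ⟨i, w⟩ :=
    sigmaGraph_reachable ((hG i).preconnected v w)
  exact sigmaGraph_reachable_fst (r.map φ.toHom)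

/-- the fiber of a sigma type over an index -/
def fiberEquiv {ι : Type} (V : ι → Type) (i : ι) :
    V i ≃ {p : Σ i', V i' // p.1 = i} where
  toFun v := ⟨⟨i, v⟩, rfl⟩
  invFun p := p.2 ▸ p.1.2
  left_inv v := rfl
  right_inv := by rintro ⟨⟨i', v'⟩, rfl⟩; rfl

section MainPart2
variable [Fintype α] {G : SimpleGraph α} (φ : HGraph G a ≃g HGraph G b)

lemma part2 {G : SimpleGraph α} (hconn : G.Connected) (hcard : 2 ≤ Fintype.card α)
    (hne : a ≠ b) : ¬ Nonempty (HGraph G a ≃g HGraph G b) := by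
  rintro ⟨φ⟩
  haveI : Nonempty α := Fintype.card_pos_iff.mp (by omega)
  -- the induced map on indices
  set ψ : HIdx a → HIdx b := fun i => (φ ⟨i, Classical.arbitrary _⟩).1 with hψdef
  set ψ' : HIdx b → HIdx a := fun j => (φ.symm ⟨j, Classical.arbitrary _⟩).1 with hψ'def
  have hψ : ∀ p : Σ i, HType α a i, (φ p).1 = ψ p.1 :=
    fun p => iso_fst (HFam_connected hconn) φ p ⟨p.1, Classical.arbitrary _⟩ rfl
  have hψ' : ∀ q : Σ j, HType α b j, (φ.symm q).1 = ψ' q.1 :=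
    fun q => iso_fst (HFam_connected hconn) φ.symm q ⟨q.1, Classical.arbitrary _⟩ rfl
  have hli : ∀ i, ψ' (ψ i) = i := by
    intro i
    have h1 := hψ' (φ ⟨i, Classical.arbitrary _⟩)
    rw [φ.symm_apply_apply] at h1
    exact h1.symm
  have hri : ∀ j, ψ (ψ' j) = j := by
    intro j
    have h1 := hψ (φ.symm ⟨j, Classical.arbitrary _⟩)
    rw [φ.apply_symm_apply] at h1
    exact h1.symm
  set Ψ : HIdx a ≃ HIdx b := ⟨ψ, ψ', hli, hri⟩ with hΨdef
  -- cardinality of components is preserved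
  have hcardeq : ∀ i : HIdx a, Fintype.card (HType α a i) = Fintype.card (HType α b (ψ i)) := by
    intro i
    refine Fintype.card_congr (((fiberEquiv _ i).trans ?_).trans (fiberEquiv _ (ψ i)).symm)
    refine ⟨fun p => ⟨φ p.1, by rw [hψ p.1, p.2]⟩, fun q => ⟨φ.symm q.1, by rw [hψ' q.1, q.2, hli i]⟩,
      fun p => Subtype.ext (φ.symm_apply_apply p.1), fun q => Subtype.ext (φ.apply_symm_apply q.1)⟩
  -- hence degrees are preserved
  have hdeg : ∀ i : HIdx a, deg (ψ i) = deg i := by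
    intro i
    have h1 := hcardeq i
    rw [card_HType, card_HType] at h1
    have := Nat.pow_right_injective hcard h1
    omega
  -- count components of each degree
  have key : ∀ n, a n = b n := by
    intro n
    have e1 : ∀ (c : ℕ → ℕ), Fin (c n) ≃ {i : HIdx c // deg i = n + 1} := by
      intro c
      refine ⟨fun k => ⟨Sum.inr ⟨n, k⟩, rfl⟩, fun i =>
        match i with
        | ⟨Sum.inl _, h⟩ => absurd h (by simp [deg])
        | ⟨Sum.inr ⟨m, k⟩, h⟩ => Fin.cast (congrArg c (Nat.succ_injective h)) k,
        fun k => rfl, ?_⟩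
      rintro ⟨i, h⟩
      match i, h with
      | Sum.inl _, h => exact absurd h (by simp [deg])
      | Sum.inr ⟨m, k⟩, h =>
        obtain rfl : m = n := Nat.succ_injective h
        rfl
    have e2 : {i : HIdx a // deg i = n + 1} ≃ {j : HIdx b // deg j = n + 1} :=
      Ψ.subtypeEquiv fun i => by show _ ↔ deg (ψ i) = n + 1; rw [hdeg i]
    have := Fintype.card_congr (((e1 a).trans e2).trans (e1 b).symm)
    simpa using this
  exact hne (funext key)

end MainPart2
end Part2
end Stmt19Aux


/-- failure of the unique square root property for the box product of
countable graphs with components of infinite multiplicity. Let `G` be a finite connected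
simple graph with at least two vertices. For any two sequences `a`, `b` of positive
integers, the box squares `H_a □ H_a` and `H_b □ H_b` are isomorphic, yet if `a ≠ b`
then `H_a` is not isomorphic to `H_b`. -/
theorem stmt19 {α : Type} [Fintype α] (G : SimpleGraph α)
    (hconn : G.Connected) (hcard : 2 ≤ Fintype.card α)
    (a b : ℕ → ℕ) (ha : ∀ n, 0 < a n) (hb : ∀ n, 0 < b n) :
    Nonempty ((HGraph G a).boxProd (HGraph G a) ≃g (HGraph G b).boxProd (HGraph G b)) ∧
      (a ≠ b → ¬ Nonempty (HGraph G a ≃g HGraph G b)) := by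
  exact ⟨Stmt19Aux.part1 G ha hb, fun hne => Stmt19Aux.part2 hconn hcard hne⟩
end
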